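/- arXiv:2408.13276 — 4 statements merged into one kernel-verified Lean document; each statement's English description precedes it below -/
import Mathlib

section
/- Let U ∈ R^{d×r} and V ∈ R^{d×r} be matrices with rank(U) = min{r, d}. Then dist²(U,V) := min over orthogonal R ∈ R^{r×r} of ‖UR − V‖_F² satisfies dist²(U,V) ≤ ‖UU^T − VV^T‖_F² / (2(√2 − 1) σ_min(U)²), where σ_min(U) is the smallest nonzero singular value of U. -/
open scoped BigOperators
open Matrix

noncomputable def frobNorm {d₁ d₂ : ℕ} (A : Matrix (Fin d₁) (Fin d₂) ℝ) : ℝ :=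
  Real.sqrt (∑ i, ∑ j, A i j ^ 2)

noncomputable def vecNorm {m : ℕ} (y : Fin m → ℝ) : ℝ :=
  Real.sqrt (∑ i, y i ^ 2)

noncomputable def specNorm {d₁ d₂ : ℕ} (A : Matrix (Fin d₁) (Fin d₂) ℝ) : ℝ :=
  ‖LinearMap.toContinuousLinearMap (Matrix.toEuclideanLin A)‖

noncomputable def tinner {d : ℕ} (A B : Matrix (Fin d) (Fin d) ℝ) : ℝ :=
  (A * Bᵀ).trace

noncomputable def sigmaMin {d₁ d₂ : ℕ} (A : Matrix (Fin d₁) (Fin d₂) ℝ) : ℝ :=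
  sInf {s : ℝ | 0 < s ∧ ∃ i, s ^ 2 = (show (Aᵀ * A).IsHermitian by
    simpa using Matrix.isHermitian_conjTranspose_mul_self A).eigenvalues i}

noncomputable def projPerp {d : ℕ} (w : Fin d → ℝ) (Z : Matrix (Fin d) (Fin d) ℝ) :
    Matrix (Fin d) (Fin d) ℝ :=
  Z - tinner (Matrix.vecMulVec w w) Z • Matrix.vecMulVec w w

open Matrix RealInnerProductSpace

section helpers
variable {m n r : ℕ}

private lemma hermT {d₁ d₂ : ℕ} (A : Matrix (Fin d₁) (Fin d₂) ℝ) : (Aᵀ * A).IsHermitian := by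
  simpa using Matrix.isHermitian_conjTranspose_mul_self A

private lemma unequiv {r : ℕ} (z : EuclideanSpace ℝ (Fin r)) :
    (WithLp.equiv 2 ((i : Fin r) → ℝ)) z = z := rfl

private lemma inner_eq_dot (x y : EuclideanSpace ℝ (Fin r)) : ⟪x, y⟫ = ⇑x ⬝ᵥ ⇑y := by
  simp [PiLp.inner_apply, RCLike.inner_apply, conj_trivial, dotProduct, mul_comm]

private lemma ext_mulVec {A B : Matrix (Fin m) (Fin n) ℝ}
    (h : ∀ x : Fin n → ℝ, A *ᵥ x = B *ᵥ x) : A = B := by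
  ext i j
  have := congrFun (h (Pi.single j 1)) i
  simpa [Matrix.mulVec_single] using this

private lemma sum_mulVec {ι : Type*} (s : Finset ι) (A : ι → Matrix (Fin m) (Fin n) ℝ)
    (x : Fin n → ℝ) : (∑ i ∈ s, A i) *ᵥ x = ∑ i ∈ s, (A i *ᵥ x) := by
  ext j
  simp only [Matrix.mulVec, dotProduct, Finset.sum_apply, Matrix.sum_apply,
    Finset.sum_mul]
  rw [Finset.sum_comm]

private lemma vecMulVec_mulVec (a b x : Fin r → ℝ) :
    Matrix.vecMulVec a b *ᵥ x = (b ⬝ᵥ x) • a := by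
  ext i
  simp only [Matrix.mulVec, Matrix.vecMulVec_apply, dotProduct, Pi.smul_apply,
    smul_eq_mul, Finset.mul_sum]
  rw [Finset.sum_mul]
  exact Finset.sum_congr rfl fun j _ => by ring

private lemma coe_sum_E {ι : Type*} (s : Finset ι) (f : ι → EuclideanSpace ℝ (Fin r)) :
    ⇑(∑ i ∈ s, f i) = ∑ i ∈ s, ⇑(f i) := by rw [WithLp.ofLp_sum]

private lemma coe_smul_E (c : ℝ) (x : EuclideanSpace ℝ (Fin r)) :
    ⇑(c • x) = c • ⇑x := rfl

private lemma expand_onb (b : OrthonormalBasis (Fin r) ℝ (EuclideanSpace ℝ (Fin r)))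
    (z : Fin r → ℝ) : z = ∑ i, (⇑(b i) ⬝ᵥ z) • ⇑(b i) := by
  have h := b.sum_repr' (WithLp.toLp 2 z)
  have h2 : ⇑(∑ i, ⟪b i, WithLp.toLp 2 z⟫ • b i) = z :=
    congrArg (fun w : EuclideanSpace ℝ (Fin r) => ⇑w) h
  rw [coe_sum_E] at h2
  simp_rw [coe_smul_E, inner_eq_dot] at h2
  exact h2.symm

private lemma ext_mulVec_basis (b : OrthonormalBasis (Fin n) ℝ (EuclideanSpace ℝ (Fin n)))
    {A B : Matrix (Fin m) (Fin n) ℝ} (h : ∀ j, A *ᵥ ⇑(b j) = B *ᵥ ⇑(b j)) : A = B := by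
  apply ext_mulVec
  intro x
  rw [expand_onb b x]
  have expand : ∀ C : Matrix (Fin m) (Fin n) ℝ,
      C *ᵥ (∑ i, (⇑(b i) ⬝ᵥ x) • ⇑(b i)) = ∑ i, (⇑(b i) ⬝ᵥ x) • (C *ᵥ ⇑(b i)) := by
    intro C
    rw [← Matrix.mulVecLin_apply, map_sum]
    simp [Matrix.mulVecLin_apply, Matrix.mulVec_smul]
  rw [expand A, expand B]
  exact Finset.sum_congr rfl fun i _ => by rw [h i]

private lemma dot_onb (b : OrthonormalBasis (Fin r) ℝ (EuclideanSpace ℝ (Fin r))) (i j : Fin r) :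
    ⇑(b i) ⬝ᵥ ⇑(b j) = if i = j then (1:ℝ) else 0 := by
  rw [← inner_eq_dot, orthonormal_iff_ite.mp b.orthonormal]

private lemma ctr (A : Matrix (Fin m) (Fin n) ℝ) : Aᴴ = Aᵀ := by
  ext i j
  simp [Matrix.conjTranspose_apply]

private lemma trace_transpose_mul_self_nonneg (A : Matrix (Fin m) (Fin n) ℝ) :
    0 ≤ (Aᵀ * A).trace := by
  rw [Matrix.trace]
  refine Finset.sum_nonneg fun j _ => ?_
  simp only [Matrix.diag_apply, Matrix.mul_apply, Matrix.transpose_apply]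
  exact Finset.sum_nonneg fun i _ => mul_self_nonneg _

private lemma trace_psd_mul_nonneg {A B : Matrix (Fin r) (Fin r) ℝ}
    (hA : A.PosSemidef) (hB : B.PosSemidef) : 0 ≤ (A * B).trace := by
  open scoped MatrixOrder in
  obtain ⟨C, hC⟩ := CStarAlgebra.nonneg_iff_eq_star_mul_self.mp hA.nonneg
  open scoped MatrixOrder in
  obtain ⟨D, hD⟩ := CStarAlgebra.nonneg_iff_eq_star_mul_self.mp hB.nonneg
  rw [hC, hD, star_eq_conjTranspose, star_eq_conjTranspose, ctr, ctr]
  have : Cᵀ * C * (Dᵀ * D) = Cᵀ * (C * Dᵀ) * D := by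
    simp [Matrix.mul_assoc]
  rw [this, Matrix.trace_mul_comm, ← Matrix.mul_assoc]
  have h2 : D * Cᵀ = (C * Dᵀ)ᵀ := by simp
  rw [h2]
  exact trace_transpose_mul_self_nonneg _

private lemma matrix_of_isometry
    (Z : EuclideanSpace ℝ (Fin r) ≃ₗᵢ[ℝ] EuclideanSpace ℝ (Fin r)) :
    ∃ T : Matrix (Fin r) (Fin r) ℝ,
      (∀ x : EuclideanSpace ℝ (Fin r), T *ᵥ ⇑x = ⇑(Z x)) ∧ Tᵀ * T = 1 ∧ T * Tᵀ = 1 := by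
  have hmv : ∀ x : EuclideanSpace ℝ (Fin r),
      (Matrix.of (fun i j => Z (EuclideanSpace.single j 1) i)) *ᵥ ⇑x = ⇑(Z x) := by
    intro x
    have hx : (∑ j, (x j : ℝ) • EuclideanSpace.single j (1:ℝ)) = x := by
      simpa [EuclideanSpace.basisFun_apply, EuclideanSpace.basisFun_repr] using
        (EuclideanSpace.basisFun (Fin r) ℝ).sum_repr x
    conv_rhs => rw [← hx]
    rw [map_sum]
    funext i
    rw [coe_sum_E]
    simp only [Finset.sum_apply, Pi.smul_apply]
    simp only [Matrix.mulVec, dotProduct, Matrix.of_apply, _root_.map_smul, coe_smul_E,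
      Pi.smul_apply, smul_eq_mul]
    exact Finset.sum_congr rfl fun j _ => mul_comm _ _
  have hoT : (Matrix.of (fun i j => Z (EuclideanSpace.single j 1) i))ᵀ *
      (Matrix.of (fun i j => Z (EuclideanSpace.single j 1) i)) = 1 := by
    ext i j
    have : ((Matrix.of (fun i j => Z (EuclideanSpace.single j 1) i))ᵀ *
        (Matrix.of (fun i j => Z (EuclideanSpace.single j 1) i))) i j
        = ⇑(Z (EuclideanSpace.single i 1)) ⬝ᵥ ⇑(Z (EuclideanSpace.single j 1)) := by
      simp [Matrix.mul_apply, Matrix.transpose_apply, dotProduct]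
    rw [this, ← inner_eq_dot, LinearIsometryEquiv.inner_map_map, inner_eq_dot]
    have hd : ⇑(EuclideanSpace.single i (1:ℝ)) ⬝ᵥ ⇑(EuclideanSpace.single j (1:ℝ))
        = if i = j then (1:ℝ) else 0 := by
      simp [dotProduct, EuclideanSpace.single_apply]
      simp [eq_comm, Pi.single_apply]
    rw [hd, Matrix.one_apply]
  exact ⟨_, hmv, hoT, mul_eq_one_comm.mp hoT⟩

end helpers
section core
open Matrix
variable {d r : ℕ}

private lemma trace_quad (B C : Matrix (Fin d) (Fin r) ℝ) :
    ((B * Bᵀ) * (C * Cᵀ)).trace = ((Cᵀ * B) * (Bᵀ * C)).trace := by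
  rw [show (B * Bᵀ) * (C * Cᵀ) = B * (Bᵀ * (C * Cᵀ)) from by simp [Matrix.mul_assoc],
    Matrix.trace_mul_comm,
    show (Bᵀ * (C * Cᵀ)) * B = (Bᵀ * C) * (Cᵀ * B) from by simp [Matrix.mul_assoc],
    Matrix.trace_mul_comm]

private lemma scalar_final (s σ s2 dd sa sd sg ts e : ℝ)
    (hs2 : s ^ 2 = 2) (hs0 : 0 ≤ s)
    (h1 : e = (1/2) * s2 + 2 * sa + (1/2) * dd)
    (h2 : sg = (1/2) * s2 + sa - (1/2) * sd)
    (hs2n : 0 ≤ s2) (hddn : 0 ≤ dd) (hsan : 0 ≤ sa)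
    (hcs : sd ^ 2 ≤ s2 * dd) (hsg : σ ^ 2 * ts ≤ sg) :
    2 * (s - 1) * σ ^ 2 * ts ≤ e := by
  have hs1 : 1 ≤ s := by nlinarith
  have hsle : s ≤ 2 := by nlinarith
  set x := Real.sqrt s2 with hxdef
  set y := Real.sqrt dd with hydef
  have hx : x ^ 2 = s2 := Real.sq_sqrt hs2n
  have hy : y ^ 2 = dd := Real.sq_sqrt hddn
  have hx0 : 0 ≤ x := Real.sqrt_nonneg _
  have hy0 : 0 ≤ y := Real.sqrt_nonneg _
  have hsdlb : -(x * y) ≤ sd := by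
    nlinarith [hcs, hx, hy, mul_nonneg hx0 hy0, sq_nonneg (sd + x * y)]
  have c1 : 0 ≤ (1 / 2 : ℝ) * ((s - 1) * x - y) ^ 2 := by positivity
  have c2 : 0 ≤ (2 - 2 * (s - 1)) * sa := mul_nonneg (by linarith) hsan
  have c3 : 0 ≤ (s - 1) * (sd + x * y) := mul_nonneg (by linarith) (by linarith)
  have h4 : s ^ 2 * x ^ 2 = 2 * x ^ 2 := by rw [hs2]
  have m2 : 2 * (s - 1) * sg ≤ e := by nlinarith [c1, c2, c3, hx, hy, h4]
  have m1 : 0 ≤ 2 * (s - 1) * (sg - σ ^ 2 * ts) := mul_nonneg (by linarith) (by linarith)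
  nlinarith [m1, m2]

private lemma core_ineq (U W : Matrix (Fin d) (Fin r) ℝ)
    (Pp : Matrix (Fin r) (Fin r) ℝ) (σ : ℝ)
    (hA : (Wᵀ * U).PosSemidef)
    (hWP : W * Pp = W) (hUP : U * Pp = U)
    (hGP : (Uᵀ * U - σ ^ 2 • Pp).PosSemidef) :
    2 * (Real.sqrt 2 - 1) * σ ^ 2 * ((W - U)ᵀ * (W - U)).trace
      ≤ ((W * Wᵀ - U * Uᵀ) * (W * Wᵀ - U * Uᵀ)ᵀ).trace := by
  have hAs : (Wᵀ * U)ᵀ = Wᵀ * U := by rw [← ctr]; exact hA.1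
  set K : Matrix (Fin r) (Fin r) ℝ := Wᵀ * W with hK
  set G : Matrix (Fin r) (Fin r) ℝ := Uᵀ * U with hG
  set A : Matrix (Fin r) (Fin r) ℝ := Wᵀ * U with hAdef
  set S : Matrix (Fin r) (Fin r) ℝ := (W - U)ᵀ * (W - U) with hSdef
  have hS2 : S = K + G - A - A := by
    rw [hSdef, Matrix.transpose_sub, Matrix.sub_mul, Matrix.mul_sub, Matrix.mul_sub]
    have hUW : Uᵀ * W = A := by
      rw [← hAs, hAdef, Matrix.transpose_mul, Matrix.transpose_transpose]
    rw [hUW]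
    abel
  have hSs : Sᵀ = S := by rw [hSdef]; simp [Matrix.transpose_mul]
  have hSpsd : S.PosSemidef := by
    have := Matrix.posSemidef_conjTranspose_mul_self (W - U)
    rwa [ctr] at this
  set D : Matrix (Fin r) (Fin r) ℝ := K - G with hD
  have hDs : Dᵀ = D := by rw [hD]; simp [hK, hG, Matrix.transpose_mul]
  -- scalar atoms
  set kk := (K * K).trace with hkk
  set gg := (G * G).trace with hgg
  set aa := (A * A).trace with haa
  set kg := (K * G).trace with hkg
  set ka := (K * A).trace with hka
  set ga := (G * A).trace with hga
  have tGK : (G * K).trace = kg := by rw [hkg, Matrix.trace_mul_comm]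
  have tAK : (A * K).trace = ka := by rw [hka, Matrix.trace_mul_comm]
  have tAG : (A * G).trace = ga := by rw [hga, Matrix.trace_mul_comm]
  have e1 : (S * S).trace = kk + gg + 4 * aa + 2 * kg - 4 * ka - 4 * ga := by
    rw [hS2]
    simp only [Matrix.sub_mul, Matrix.mul_sub, Matrix.add_mul, Matrix.mul_add,
      Matrix.trace_sub, Matrix.trace_add]
    rw [tGK, tAK, tAG]
    ring
  have e2 : (S * A).trace = ka + ga - 2 * aa := by
    rw [hS2]
    simp only [Matrix.sub_mul, Matrix.add_mul, Matrix.trace_sub, Matrix.trace_add]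
    ring
  have e3 : (D * D).trace = kk + gg - 2 * kg := by
    rw [hD]
    simp only [Matrix.sub_mul, Matrix.mul_sub, Matrix.trace_sub]
    rw [tGK]
    ring
  have e4 : (S * D).trace = kk - gg - 2 * ka + 2 * ga := by
    rw [hS2, hD]
    simp only [Matrix.sub_mul, Matrix.mul_sub, Matrix.add_mul, Matrix.mul_add,
      Matrix.trace_sub, Matrix.trace_add]
    rw [tGK, tAK, tAG]
    ring
  have e5 : (S * G).trace = kg + gg - 2 * ga := by
    rw [hS2]
    simp only [Matrix.sub_mul, Matrix.add_mul, Matrix.trace_sub, Matrix.trace_add]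
    rw [tAG]
    ring
  have eE : ((W * Wᵀ - U * Uᵀ) * (W * Wᵀ - U * Uᵀ)ᵀ).trace = kk + gg - 2 * aa := by
    have hsym : (W * Wᵀ - U * Uᵀ)ᵀ = W * Wᵀ - U * Uᵀ := by
      simp [Matrix.transpose_sub, Matrix.transpose_mul]
    rw [hsym]
    simp only [Matrix.sub_mul, Matrix.mul_sub, Matrix.trace_sub]
    rw [trace_quad W W, trace_quad W U, trace_quad U W, trace_quad U U]
    have hUW : Uᵀ * W = Aᵀ := by
      rw [hAdef, Matrix.transpose_mul, Matrix.transpose_transpose]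
    have h1 : ((Uᵀ * W) * (Wᵀ * U)).trace = aa := by
      rw [hUW, ← hAdef, Matrix.trace_mul_comm, hAs, haa]
    have h2 : ((Wᵀ * U) * (Uᵀ * W)).trace = aa := by
      rw [hUW, ← hAdef, hAs, haa]
    rw [h1, h2]
    ring
  -- nonnegativity facts
  have hs2n : 0 ≤ (S * S).trace := by
    have : S * S = Sᵀ * S := by rw [hSs]
    rw [this]; exact trace_transpose_mul_self_nonneg S
  have hddn : 0 ≤ (D * D).trace := by
    have : D * D = Dᵀ * D := by rw [hDs]
    rw [this]; exact trace_transpose_mul_self_nonneg D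
  have hsan : 0 ≤ (S * A).trace := trace_psd_mul_nonneg hSpsd hA
  -- Cauchy-Schwarz
  have hcs : ((S * D).trace) ^ 2 ≤ (S * S).trace * (D * D).trace := by
    have hS' : ∀ i j, S j i = S i j := fun i j => by
      have := congrFun (congrFun hSs i) j
      simpa [Matrix.transpose_apply] using this
    have hD' : ∀ i j, D j i = D i j := fun i j => by
      have := congrFun (congrFun hDs i) j
      simpa [Matrix.transpose_apply] using this
    have t1 : (S * D).trace = ∑ p : Fin r × Fin r, S p.1 p.2 * D p.2 p.1 := by
      rw [Fintype.sum_prod_type]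
      simp [Matrix.trace, Matrix.diag_apply, Matrix.mul_apply]
    have t2 : (S * S).trace = ∑ p : Fin r × Fin r, (S p.1 p.2) ^ 2 := by
      rw [Fintype.sum_prod_type]
      simp only [Matrix.trace, Matrix.diag_apply, Matrix.mul_apply, sq]
      exact Finset.sum_congr rfl fun i _ => Finset.sum_congr rfl fun j _ => by rw [hS' i j]
    have t3 : (D * D).trace = ∑ p : Fin r × Fin r, (D p.2 p.1) ^ 2 := by
      rw [Fintype.sum_prod_type]
      simp only [Matrix.trace, Matrix.diag_apply, Matrix.mul_apply, sq]
      exact Finset.sum_congr rfl fun i _ => Finset.sum_congr rfl fun j _ => by rw [hD' i j]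
    rw [t1, t2, t3]
    exact Finset.sum_mul_sq_le_sq_mul_sq Finset.univ _ _
  -- sigma bound
  have hsg : σ ^ 2 * S.trace ≤ (S * G).trace := by
    have hSP : S * Pp = S := by
      rw [hSdef, Matrix.mul_assoc, show (W - U) * Pp = W - U from by
        rw [Matrix.sub_mul, hWP, hUP]]
    have h0 : 0 ≤ (S * (G - σ ^ 2 • Pp)).trace := trace_psd_mul_nonneg hSpsd hGP
    rw [Matrix.mul_sub, Matrix.trace_sub, Matrix.mul_smul, Matrix.trace_smul, hSP] at h0
    simp only [smul_eq_mul] at h0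
    linarith
  refine scalar_final (Real.sqrt 2) σ ((S*S).trace) ((D*D).trace) ((S*A).trace)
    ((S*D).trace) ((S*G).trace) (S.trace) _
    (Real.sq_sqrt (by norm_num)) (Real.sqrt_nonneg 2) ?_ ?_ hs2n hddn hsan hcs hsg
  · rw [eE, e1, e2, e3]; ring
  · rw [e5, e1, e2, e4]; ring

end core
section spectral
open Matrix RealInnerProductSpace
variable {d r : ℕ}

private lemma psd_tmul (A : Matrix (Fin d) (Fin r) ℝ) : (Aᵀ * A).PosSemidef := by
  have := Matrix.posSemidef_conjTranspose_mul_self A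
  rwa [ctr] at this

private lemma spec_repr (B : Matrix (Fin r) (Fin r) ℝ) (hB : B.IsHermitian) :
    B = ∑ i, hB.eigenvalues i •
      Matrix.vecMulVec ⇑(hB.eigenvectorBasis i) ⇑(hB.eigenvectorBasis i) := by
  apply ext_mulVec_basis hB.eigenvectorBasis
  intro j
  rw [hB.mulVec_eigenvectorBasis, sum_mulVec]
  simp_rw [Matrix.smul_mulVec, vecMulVec_mulVec, dot_onb]
  rw [Finset.sum_eq_single j]
  · simp
  · intro i _ hij
    simp [hij]
  · intro h
    exact absurd (Finset.mem_univ j) h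

/-- if the eigenvalue is 0 then U *ᵥ v = 0 -/
private lemma mulVec_zero_of_eig0 (U : Matrix (Fin d) (Fin r) ℝ) {i : Fin r}
    (h : (hermT U).eigenvalues i = 0) :
    U *ᵥ ⇑((hermT U).eigenvectorBasis i) = 0 := by
  have hmv := (hermT U).mulVec_eigenvectorBasis i
  rw [h, zero_smul] at hmv
  rw [← dotProduct_self_eq_zero]
  calc (U *ᵥ ⇑((hermT U).eigenvectorBasis i)) ⬝ᵥ
        (U *ᵥ ⇑((hermT U).eigenvectorBasis i))
      = (⇑((hermT U).eigenvectorBasis i) ᵥ* Uᵀ) ⬝ᵥ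
        (U *ᵥ ⇑((hermT U).eigenvectorBasis i)) := by
        rw [Matrix.vecMul_transpose]
    _ = ⇑((hermT U).eigenvectorBasis i) ⬝ᵥ
        (Uᵀ *ᵥ (U *ᵥ ⇑((hermT U).eigenvectorBasis i))) :=
        (Matrix.dotProduct_mulVec _ Uᵀ _).symm
    _ = ⇑((hermT U).eigenvectorBasis i) ⬝ᵥ
        ((Uᵀ * U) *ᵥ ⇑((hermT U).eigenvectorBasis i)) := by
        rw [Matrix.mulVec_mulVec]
    _ = ⇑((hermT U).eigenvectorBasis i) ⬝ᵥ
        ((Uᵀ * U) *ᵥ ⇑((hermT U).eigenvectorBasis i)) := rfl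
    _ = 0 := by rw [hmv, dotProduct_zero]

private lemma dot_eig0_transpose_mulVec (U : Matrix (Fin d) (Fin r) ℝ) {i : Fin r}
    (h : (hermT U).eigenvalues i = 0) (y : Fin d → ℝ) :
    ⇑((hermT U).eigenvectorBasis i) ⬝ᵥ (Uᵀ *ᵥ y) = 0 := by
  rw [Matrix.dotProduct_mulVec, Matrix.vecMul_transpose, mulVec_zero_of_eig0 U h,
    zero_dotProduct]

private lemma sigmaMin_nonneg (U : Matrix (Fin d) (Fin r) ℝ) : 0 ≤ sigmaMin U :=
  Real.sInf_nonneg fun _ hx => le_of_lt hx.1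

private lemma sigmaMin_sq_le (U : Matrix (Fin d) (Fin r) ℝ) (i : Fin r)
    (hi : (hermT U).eigenvalues i ≠ 0) :
    sigmaMin U ^ 2 ≤ (hermT U).eigenvalues i := by
  set lami := (hermT U).eigenvalues i with hlami
  have hnn : 0 ≤ lami := (psd_tmul U).eigenvalues_nonneg i
  have hpos : 0 < lami := lt_of_le_of_ne hnn (Ne.symm hi)
  have hbdd : BddBelow {s : ℝ | 0 < s ∧ ∃ j, s ^ 2 =
      (hermT U).eigenvalues j} :=
    ⟨0, fun x hx => le_of_lt hx.1⟩
  have hmem : Real.sqrt lami ∈ {s : ℝ | 0 < s ∧ ∃ j, s ^ 2 =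
      (hermT U).eigenvalues j} :=
    ⟨Real.sqrt_pos.mpr hpos, i, Real.sq_sqrt hnn⟩
  have h1 : sigmaMin U ≤ Real.sqrt lami := csInf_le hbdd hmem
  calc sigmaMin U ^ 2 ≤ Real.sqrt lami ^ 2 :=
        pow_le_pow_left₀ (sigmaMin_nonneg U) h1 2
    _ = lami := Real.sq_sqrt hnn

private lemma sigmaMin_pos (U : Matrix (Fin d) (Fin r) ℝ) (hUne : U ≠ 0) :
    0 < sigmaMin U := by
  classical
  set hG := hermT U with hGdef
  have hex : ∃ i, hG.eigenvalues i ≠ 0 := by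
    by_contra hcon
    push_neg at hcon
    have hzero : Uᵀ * U = 0 := by
      rw [spec_repr (Uᵀ * U) hG]
      refine Finset.sum_eq_zero fun i _ => ?_
      rw [hcon i, zero_smul]
    apply hUne
    ext i j
    have htr : (Uᵀ * U) j j = 0 := by rw [hzero]; rfl
    have h2 : ∑ k, U k j * U k j = 0 := by
      simpa [Matrix.mul_apply, Matrix.conjTranspose_apply] using htr
    have h3 := (Finset.sum_eq_zero_iff_of_nonneg
      (fun k _ => mul_self_nonneg (U k j))).mp h2 i (Finset.mem_univ i)
    simpa [mul_self_eq_zero] using h3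
  obtain ⟨i₀, hi₀⟩ := hex
  have hnn : ∀ j, 0 ≤ hG.eigenvalues j := fun j => (psd_tmul U).eigenvalues_nonneg j
  have hFne : ((Finset.univ.filter (fun i => hG.eigenvalues i ≠ 0)).image
      (fun i => Real.sqrt (hG.eigenvalues i))).Nonempty :=
    ⟨Real.sqrt (hG.eigenvalues i₀), Finset.mem_image_of_mem _ (by simp [hi₀])⟩
  set F : Finset ℝ := (Finset.univ.filter (fun i => hG.eigenvalues i ≠ 0)).image
    (fun i => Real.sqrt (hG.eigenvalues i)) with hF
  have hmpos : 0 < F.min' hFne := by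
    have := F.min'_mem hFne
    simp only [hF, Finset.mem_image, Finset.mem_filter] at this
    obtain ⟨j, ⟨_, hj⟩, hjm⟩ := this
    exact lt_of_lt_of_le (Real.sqrt_pos.mpr (lt_of_le_of_ne (hnn j) (Ne.symm hj)))
      (le_of_eq hjm)
  have hlb : ∀ x ∈ {s : ℝ | 0 < s ∧ ∃ j, s ^ 2 = hG.eigenvalues j}, F.min' hFne ≤ x := by
    rintro x ⟨hx0, j, hxj⟩
    have hj0 : hG.eigenvalues j ≠ 0 := by
      rw [← hxj]; positivity
    have hxs : x = Real.sqrt (hG.eigenvalues j) := by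
      rw [← hxj, Real.sqrt_sq hx0.le]
    rw [hxs]
    exact F.min'_le _ (Finset.mem_image_of_mem _ (by simp [hj0]))
  have : F.min' hFne ≤ sigmaMin U :=
    le_csInf ⟨Real.sqrt (hG.eigenvalues i₀),
      ⟨Real.sqrt_pos.mpr (lt_of_le_of_ne (hnn i₀) (Ne.symm hi₀)), i₀,
        Real.sq_sqrt (hnn i₀)⟩⟩ hlb
  linarith

end spectral
section PiU
open Matrix RealInnerProductSpace
variable {d r : ℕ}

private noncomputable def eigL (U : Matrix (Fin d) (Fin r) ℝ) : Fin r → ℝ :=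
  (hermT U).eigenvalues

private noncomputable def eigV (U : Matrix (Fin d) (Fin r) ℝ) : Fin r → (Fin r → ℝ) :=
  fun i => ⇑((hermT U).eigenvectorBasis i)

private noncomputable def PiU (U : Matrix (Fin d) (Fin r) ℝ) : Matrix (Fin r) (Fin r) ℝ :=
  ∑ i, if eigL U i = 0 then 0 else Matrix.vecMulVec (eigV U i) (eigV U i)

private lemma dot_sum_right {ι : Type*} (s : Finset ι) (x : Fin r → ℝ) (v : ι → Fin r → ℝ) :
    x ⬝ᵥ (∑ i ∈ s, v i) = ∑ i ∈ s, x ⬝ᵥ v i := by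
  simp only [dotProduct, Finset.sum_apply, Finset.mul_sum]
  rw [Finset.sum_comm]

private lemma PiU_fix (U : Matrix (Fin d) (Fin r) ℝ) (z : Fin r → ℝ)
    (h : ∀ i, eigL U i = 0 → eigV U i ⬝ᵥ z = 0) : PiU U *ᵥ z = z := by
  rw [PiU, sum_mulVec]
  have hterm : ∀ i, (if eigL U i = 0 then (0 : Matrix (Fin r) (Fin r) ℝ)
      else Matrix.vecMulVec (eigV U i) (eigV U i)) *ᵥ z = (eigV U i ⬝ᵥ z) • eigV U i := by
    intro i
    split_ifs with hi
    · rw [Matrix.zero_mulVec, h i hi, zero_smul]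
    · rw [vecMulVec_mulVec]
  simp_rw [hterm]
  exact (expand_onb ((hermT U).eigenvectorBasis) z).symm

private lemma PiU_symm (U : Matrix (Fin d) (Fin r) ℝ) : (PiU U)ᵀ = PiU U := by
  ext i j
  rw [Matrix.transpose_apply, PiU]
  simp only [Matrix.sum_apply]
  refine Finset.sum_congr rfl fun k _ => ?_
  by_cases hk : eigL U k = 0 <;> simp [hk, Matrix.vecMulVec_apply, mul_comm]

private lemma U_mul_PiU (U : Matrix (Fin d) (Fin r) ℝ) : U * PiU U = U := by
  have h1 : PiU U * Uᵀ = Uᵀ := by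
    apply ext_mulVec
    intro y
    rw [← Matrix.mulVec_mulVec]
    exact PiU_fix U _ (fun i hi => dot_eig0_transpose_mulVec U hi y)
  have h2 := congrArg Matrix.transpose h1
  rw [Matrix.transpose_mul, Matrix.transpose_transpose, PiU_symm] at h2
  exact h2

private lemma quad_G (U : Matrix (Fin d) (Fin r) ℝ) (x : Fin r → ℝ) :
    x ⬝ᵥ ((Uᵀ * U) *ᵥ x) = ∑ i, eigL U i * (eigV U i ⬝ᵥ x) ^ 2 := by
  have h' : Uᵀ * U = ∑ i, eigL U i • Matrix.vecMulVec (eigV U i) (eigV U i) :=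
    spec_repr (Uᵀ * U) (hermT U)
  rw [h', sum_mulVec]
  simp_rw [Matrix.smul_mulVec, vecMulVec_mulVec, dot_sum_right]
  refine Finset.sum_congr rfl fun i _ => ?_
  rw [dotProduct_smul, dotProduct_smul, dotProduct_comm]
  simp [sq]

private lemma quad_PiU (U : Matrix (Fin d) (Fin r) ℝ) (x : Fin r → ℝ) :
    x ⬝ᵥ (PiU U *ᵥ x) = ∑ i, if eigL U i = 0 then 0 else (eigV U i ⬝ᵥ x) ^ 2 := by
  rw [PiU, sum_mulVec, dot_sum_right]
  refine Finset.sum_congr rfl fun i _ => ?_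
  split_ifs with hi
  · rw [Matrix.zero_mulVec, dotProduct_zero]
  · rw [vecMulVec_mulVec, dotProduct_smul, dotProduct_comm]
    simp [sq]

private lemma PiU_psd_diff (U : Matrix (Fin d) (Fin r) ℝ) :
    (Uᵀ * U - sigmaMin U ^ 2 • PiU U).PosSemidef := by
  rw [Matrix.posSemidef_iff_dotProduct_mulVec]
  constructor
  · show _ = _
    rw [ctr, Matrix.transpose_sub, Matrix.transpose_smul, PiU_symm, Matrix.transpose_mul,
      Matrix.transpose_transpose]
  · intro x
    have hx : star x = x := by simp
    rw [hx, Matrix.sub_mulVec, dotProduct_sub, Matrix.smul_mulVec,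
      dotProduct_smul, quad_G, quad_PiU]
    rw [smul_eq_mul, Finset.mul_sum, ← Finset.sum_sub_distrib]
    refine Finset.sum_nonneg fun i _ => ?_
    by_cases hi : eigL U i = 0
    · simp [hi]
    · rw [if_neg hi]
      have h1 : sigmaMin U ^ 2 ≤ eigL U i := sigmaMin_sq_le U i hi
      nlinarith [sq_nonneg (eigV U i ⬝ᵥ x)]

end PiU
section polar
open Matrix RealInnerProductSpace
variable {r : ℕ}

private lemma MtM_mulVec (M : Matrix (Fin r) (Fin r) ℝ) (j : Fin r) :
    (Mᵀ * M) *ᵥ eigV M j = eigL M j • eigV M j :=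
  (hermT M).mulVec_eigenvectorBasis j

private lemma Mdot (M : Matrix (Fin r) (Fin r) ℝ) (i j : Fin r) :
    (M *ᵥ eigV M i) ⬝ᵥ (M *ᵥ eigV M j) = eigL M j * (eigV M i ⬝ᵥ eigV M j) := by
  rw [← Matrix.vecMul_transpose M (eigV M i), ← Matrix.dotProduct_mulVec,
    Matrix.mulVec_mulVec, MtM_mulVec, dotProduct_smul]
  rfl

private lemma M_mulVec_zero (M : Matrix (Fin r) (Fin r) ℝ) {j : Fin r}
    (h : eigL M j = 0) : M *ᵥ eigV M j = 0 := by
  rw [← dotProduct_self_eq_zero, Mdot, h, zero_mul]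

private lemma dot_eigV (M : Matrix (Fin r) (Fin r) ℝ) (i j : Fin r) :
    eigV M i ⬝ᵥ eigV M j = if i = j then (1:ℝ) else 0 :=
  dot_onb ((hermT M).eigenvectorBasis) i j

private lemma polar (M : Matrix (Fin r) (Fin r) ℝ) :
    ∃ O P : Matrix (Fin r) (Fin r) ℝ, Oᵀ * O = 1 ∧ O * Oᵀ = 1 ∧ P.PosSemidef ∧ M = O * P ∧
      (∀ j, P *ᵥ eigV M j = Real.sqrt (eigL M j) • eigV M j) := by
  classical
  have hnn : ∀ i, 0 ≤ eigL M i := fun i => (psd_tmul M).eigenvalues_nonneg i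
  set pbB := (hermT M).eigenvectorBasis with hpbB
  -- the orthonormal family u on the nonzero eigenvalue indices
  set uu : Fin r → EuclideanSpace ℝ (Fin r) := fun i =>
    (Real.sqrt (eigL M i))⁻¹ • WithLp.toLp 2 (M *ᵥ eigV M i) with huu
  have horth : Orthonormal ℝ (Set.domRestrict {i | eigL M i ≠ 0} uu) := by
    rw [orthonormal_iff_ite]
    rintro ⟨i, hi⟩ ⟨j, hj⟩
    rw [Set.restrict_apply, Set.restrict_apply, huu]
    rw [inner_eq_dot]
    simp only [WithLp.ofLp_smul, WithLp.ofLp_toLp]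
    rw [smul_dotProduct, dotProduct_smul, Mdot, dot_eigV]
    by_cases hij : i = j
    · subst hij
      simp only [if_pos rfl, Subtype.mk.injEq, smul_eq_mul, ↓reduceIte, mul_one]
      have hs : Real.sqrt (eigL M i) * Real.sqrt (eigL M i) = eigL M i :=
        Real.mul_self_sqrt (hnn i)
      have hsne : Real.sqrt (eigL M i) ≠ 0 := by
        refine ne_of_gt (Real.sqrt_pos.mpr ?_)
        exact lt_of_le_of_ne (hnn i) (Ne.symm hi)
      field_simp
      rw [Real.sq_sqrt (hnn i)]
    · have : (⟨i, hi⟩ : {k | eigL M k ≠ 0}) ≠ ⟨j, hj⟩ := by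
        simp [Subtype.ext_iff, hij]
      rw [if_neg hij, if_neg this]
      simp
  obtain ⟨bO, hbO⟩ := horth.exists_orthonormalBasis_extension_of_card_eq
    (by simp)
  obtain ⟨O, hOmv, hOt, hOtt⟩ := matrix_of_isometry (pbB.repr.trans bO.repr.symm)
  have hOb : ∀ i, O *ᵥ eigV M i = ⇑(bO i) := by
    intro i
    have h1 : O *ᵥ ⇑(pbB i) = ⇑((pbB.repr.trans bO.repr.symm) (pbB i)) := hOmv (pbB i)
    have h2 : (pbB.repr.trans bO.repr.symm) (pbB i) = bO i := by
      simp [LinearIsometryEquiv.trans_apply, OrthonormalBasis.repr_self,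
        OrthonormalBasis.repr_symm_single]
    rw [h2] at h1
    exact h1
  set P : Matrix (Fin r) (Fin r) ℝ :=
    ∑ i, Real.sqrt (eigL M i) • Matrix.vecMulVec (eigV M i) (eigV M i) with hP
  have hPmv : ∀ j, P *ᵥ eigV M j = Real.sqrt (eigL M j) • eigV M j := by
    intro j
    rw [hP, _root_.sum_mulVec]
    simp_rw [Matrix.smul_mulVec, _root_.vecMulVec_mulVec, dot_eigV]
    rw [Finset.sum_eq_single j]
    · simp
    · intro i _ hij
      simp [hij]
    · intro h
      exact absurd (Finset.mem_univ j) h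
  have hPpsd : P.PosSemidef := by
    rw [Matrix.posSemidef_iff_dotProduct_mulVec]
    constructor
    · show _ = _
      rw [ctr, hP]
      ext i j
      simp only [Matrix.transpose_apply, Matrix.sum_apply, Matrix.smul_apply,
        Matrix.vecMulVec_apply, smul_eq_mul]
      exact Finset.sum_congr rfl fun k _ => by ring
    · intro x
      have hx : star x = x := by simp
      rw [hx, hP, _root_.sum_mulVec, dot_sum_right]
      refine Finset.sum_nonneg fun i _ => ?_
      rw [Matrix.smul_mulVec, _root_.vecMulVec_mulVec, dotProduct_smul,
        dotProduct_smul]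
      rw [dotProduct_comm]
      have : eigV M i ⬝ᵥ x * (eigV M i ⬝ᵥ x) ≥ 0 := mul_self_nonneg _
      have hs := Real.sqrt_nonneg (eigL M i)
      simp only [smul_eq_mul]
      nlinarith
  refine ⟨O, P, hOt, hOtt, hPpsd, ?_, hPmv⟩
  apply ext_mulVec_basis ((hermT M).eigenvectorBasis)
  intro j
  have hcoe : ⇑((hermT M).eigenvectorBasis j) = eigV M j := rfl
  rw [hcoe, ← Matrix.mulVec_mulVec, hPmv, Matrix.mulVec_smul, hOb]
  by_cases hj : eigL M j = 0
  · rw [M_mulVec_zero M hj, hj, Real.sqrt_zero, zero_smul]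
  · have hmem : j ∈ {i | eigL M i ≠ 0} := hj
    have := hbO j hmem
    rw [this]
    simp only [huu, WithLp.ofLp_smul, WithLp.ofLp_toLp]
    have hsne : Real.sqrt (eigL M j) ≠ 0 :=
      ne_of_gt (Real.sqrt_pos.mpr (lt_of_le_of_ne (hnn j) (Ne.symm hj)))
    rw [smul_smul, mul_inv_cancel₀ hsne, one_smul]
end polar
section construct
open Matrix RealInnerProductSpace Module
variable {d r : ℕ}

private lemma onb_partial {EE : Type*} [NormedAddCommGroup EE] [InnerProductSpace ℝ EE]
    {m' n' : ℕ} (f : Fin m' → EE) (hf : Orthonormal ℝ f) :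
    Orthonormal ℝ (Set.domRestrict {j : Fin n' | (j : ℕ) < m'}
      (fun j => if h : (j : ℕ) < m' then f ⟨j, h⟩ else 0)) := by
  rw [orthonormal_iff_ite]
  rintro ⟨j1, h1⟩ ⟨j2, h2⟩
  have h1' : (j1 : ℕ) < m' := h1
  have h2' : (j2 : ℕ) < m' := h2
  simp only [Set.restrict_apply]
  rw [dif_pos h1', dif_pos h2', orthonormal_iff_ite.mp hf]
  simp [Subtype.mk.injEq, Fin.mk.injEq, Fin.ext_iff]

private lemma exists_good_R (U V : Matrix (Fin d) (Fin r) ℝ) (hU : U.rank = min r d) :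
    ∃ R : Matrix (Fin r) (Fin r) ℝ, Rᵀ * R = 1 ∧ R * Rᵀ = 1 ∧
      ((V * R)ᵀ * U).PosSemidef ∧ V * R * PiU U = V * R := by
  classical
  obtain ⟨O, P, hOt, hOtt, hPpsd, hMOP, hPmv⟩ := polar (Vᵀ * U)
  have hnn : ∀ i, 0 ≤ eigL (Vᵀ * U) i := fun i => (psd_tmul _).eigenvalues_nonneg i
  have hW0U : (V * O)ᵀ * U = P := by
    rw [Matrix.transpose_mul, Matrix.mul_assoc, hMOP, ← Matrix.mul_assoc, hOt, Matrix.one_mul]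
  set pbB := (hermT (Vᵀ * U)).eigenvectorBasis with hpbBdef
  set ι : (Fin r → ℝ) ≃ₗ[ℝ] EuclideanSpace ℝ (Fin r) :=
    (WithLp.linearEquiv 2 ℝ (Fin r → ℝ)).symm with hiota
  set QS : Submodule ℝ (EuclideanSpace ℝ (Fin r)) :=
    LinearMap.range (ι.toLinearMap ∘ₗ Matrix.mulVecLin (V * O)ᵀ) with hQS
  set WS : Submodule ℝ (EuclideanSpace ℝ (Fin r)) :=
    LinearMap.range (ι.toLinearMap ∘ₗ Matrix.mulVecLin Uᵀ) with hWS
  have hQSmem : ∀ y : Fin d → ℝ, WithLp.toLp 2 ((V * O)ᵀ *ᵥ y) ∈ QS :=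
    fun y => ⟨y, rfl⟩
  have hWSmem : ∀ y : Fin d → ℝ, WithLp.toLp 2 (Uᵀ *ᵥ y) ∈ WS :=
    fun y => ⟨y, rfl⟩
  have hQr : finrank ℝ QS = ((V * O)ᵀ).rank := by
    rw [hQS, LinearMap.range_comp, LinearEquiv.finrank_map_eq]
    rfl
  have hWr : finrank ℝ WS = (Uᵀ).rank := by
    rw [hWS, LinearMap.range_comp, LinearEquiv.finrank_map_eq]
    rfl
  have hqk : finrank ℝ QS ≤ finrank ℝ WS := by
    rw [hQr, hWr, Matrix.rank_transpose, Matrix.rank_transpose, hU]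
    refine le_trans (Matrix.rank_mul_le_left V O) (le_min ?_ ?_)
    · simpa using V.rank_le_card_width
    · simpa using V.rank_le_card_height
  have hqr : finrank ℝ QS ≤ r := by
    refine le_trans (Submodule.finrank_le QS) ?_
    simp
  -- the eigenvectors with nonzero eigenvalue belong to both QS and WS
  have hpbQ : ∀ i, eigL (Vᵀ * U) i ≠ 0 → (pbB i : EuclideanSpace ℝ (Fin r)) ∈ QS := by
    intro i hi
    refine ⟨(Real.sqrt (eigL (Vᵀ * U) i))⁻¹ • (U *ᵥ eigV (Vᵀ * U) i), ?_⟩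
    have hsne : Real.sqrt (eigL (Vᵀ * U) i) ≠ 0 :=
      ne_of_gt (Real.sqrt_pos.mpr (lt_of_le_of_ne (hnn i) (Ne.symm hi)))
    show WithLp.toLp 2 ((V * O)ᵀ *ᵥ ((Real.sqrt (eigL (Vᵀ * U) i))⁻¹ • (U *ᵥ eigV (Vᵀ * U) i)))
        = pbB i
    rw [Matrix.mulVec_smul, Matrix.mulVec_mulVec, hW0U, hPmv, smul_smul,
      inv_mul_cancel₀ hsne, one_smul]
    rfl
  have hpbW : ∀ i, eigL (Vᵀ * U) i ≠ 0 → (pbB i : EuclideanSpace ℝ (Fin r)) ∈ WS := by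
    intro i hi
    refine ⟨(eigL (Vᵀ * U) i)⁻¹ • (V *ᵥ ((Vᵀ * U) *ᵥ eigV (Vᵀ * U) i)), ?_⟩
    show WithLp.toLp 2 (Uᵀ *ᵥ ((eigL (Vᵀ * U) i)⁻¹ • (V *ᵥ ((Vᵀ * U) *ᵥ eigV (Vᵀ * U) i))))
        = pbB i
    rw [Matrix.mulVec_smul, Matrix.mulVec_mulVec, Matrix.mulVec_mulVec]
    have hassoc : Uᵀ * V * (Vᵀ * U) = (Vᵀ * U)ᵀ * (Vᵀ * U) := by
      rw [Matrix.transpose_mul, Matrix.transpose_transpose]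
    rw [hassoc, MtM_mulVec, smul_smul, inv_mul_cancel₀ hi, one_smul]
    rfl
  -- index bookkeeping
  set m := Fintype.card {i : Fin r // eigL (Vᵀ * U) i ≠ 0} with hm
  set ρ : {i : Fin r // eigL (Vᵀ * U) i ≠ 0} ≃ Fin m := Fintype.equivFin _ with hρ
  set gQ : {i : Fin r // eigL (Vᵀ * U) i ≠ 0} → QS :=
    fun i => ⟨pbB i.1, hpbQ i.1 i.2⟩ with hgQ
  set gW : {i : Fin r // eigL (Vᵀ * U) i ≠ 0} → WS :=
    fun i => ⟨pbB i.1, hpbW i.1 i.2⟩ with hgW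
  have horthQ : Orthonormal ℝ gQ := by
    rw [orthonormal_iff_ite]
    intro i j
    rw [hgQ]
    have : ⟪(⟨pbB i.1, hpbQ i.1 i.2⟩ : QS), (⟨pbB j.1, hpbQ j.1 j.2⟩ : QS)⟫
        = ⟪pbB i.1, pbB j.1⟫ := rfl
    rw [this, orthonormal_iff_ite.mp pbB.orthonormal]
    by_cases hij : i = j
    · rw [if_pos (congrArg Subtype.val hij), if_pos hij]
    · rw [if_neg (fun hc => hij (Subtype.ext hc)), if_neg hij]
  have horthW : Orthonormal ℝ gW := by
    rw [orthonormal_iff_ite]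
    intro i j
    rw [hgW]
    have : ⟪(⟨pbB i.1, hpbW i.1 i.2⟩ : WS), (⟨pbB j.1, hpbW j.1 j.2⟩ : WS)⟫
        = ⟪pbB i.1, pbB j.1⟫ := rfl
    rw [this, orthonormal_iff_ite.mp pbB.orthonormal]
    by_cases hij : i = j
    · rw [if_pos (congrArg Subtype.val hij), if_pos hij]
    · rw [if_neg (fun hc => hij (Subtype.ext hc)), if_neg hij]
  have hmq : m ≤ finrank ℝ QS := by
    have := horthQ.linearIndependent.fintype_card_le_finrank
    simpa [hm] using this
  have hmk : m ≤ finrank ℝ WS := le_trans hmq hqk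
  -- orthonormal bases of QS and WS starting with the eigenvectors
  obtain ⟨aB, haB⟩ := (onb_partial (n' := finrank ℝ QS) (gQ ∘ ρ.symm)
    (horthQ.comp ρ.symm ρ.symm.injective)).exists_orthonormalBasis_extension_of_card_eq
    (by rw [Fintype.card_fin])
  obtain ⟨wB, hwB⟩ := (onb_partial (n' := finrank ℝ WS) (gW ∘ ρ.symm)
    (horthW.comp ρ.symm ρ.symm.injective)).exists_orthonormalBasis_extension_of_card_eq
    (by rw [Fintype.card_fin])
  -- orthonormal bases of E
  have horthA : Orthonormal ℝ (fun j : Fin (finrank ℝ QS) => (aB j : EuclideanSpace ℝ (Fin r))) := by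
    rw [orthonormal_iff_ite]
    intro i j
    have : ⟪(aB i : EuclideanSpace ℝ (Fin r)), (aB j : EuclideanSpace ℝ (Fin r))⟫
        = ⟪aB i, aB j⟫ := rfl
    rw [this, orthonormal_iff_ite.mp aB.orthonormal]
  have horthW2 : Orthonormal ℝ (fun j : Fin (finrank ℝ QS) =>
      (wB ⟨j.1, lt_of_lt_of_le j.2 hqk⟩ : EuclideanSpace ℝ (Fin r))) := by
    rw [orthonormal_iff_ite]
    intro i j
    have : ⟪(wB ⟨i.1, lt_of_lt_of_le i.2 hqk⟩ : EuclideanSpace ℝ (Fin r)),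
        (wB ⟨j.1, lt_of_lt_of_le j.2 hqk⟩ : EuclideanSpace ℝ (Fin r))⟫
        = ⟪wB ⟨i.1, lt_of_lt_of_le i.2 hqk⟩, wB ⟨j.1, lt_of_lt_of_le j.2 hqk⟩⟫ := rfl
    rw [this, orthonormal_iff_ite.mp wB.orthonormal]
    simp [Fin.mk.injEq, Fin.ext_iff]
  obtain ⟨cB, hcB⟩ := (onb_partial (n' := r) _
    horthA).exists_orthonormalBasis_extension_of_card_eq (by simp)
  obtain ⟨cB', hcB'⟩ := (onb_partial (n' := r) _
    horthW2).exists_orthonormalBasis_extension_of_card_eq (by simp)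
  set ZZ := cB.repr.trans cB'.repr.symm with hZZ
  obtain ⟨T, hTmv, hTt, hTtt⟩ := matrix_of_isometry ZZ
  have hZc : ∀ j, ZZ (cB j) = cB' j := by
    intro j
    rw [hZZ]
    simp [LinearIsometryEquiv.trans_apply, OrthonormalBasis.repr_self,
      OrthonormalBasis.repr_symm_single]
  -- key pointwise facts about ZZ
  have hcBval : ∀ j : Fin (finrank ℝ QS),
      cB ⟨j.1, lt_of_lt_of_le j.2 hqr⟩ = (aB j : EuclideanSpace ℝ (Fin r)) := by
    intro j
    have hlt : ((⟨j.1, lt_of_lt_of_le j.2 hqr⟩ : Fin r) : ℕ) < finrank ℝ QS := j.2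
    rw [hcB _ hlt, dif_pos hlt]
  have hcB'val : ∀ j : Fin (finrank ℝ QS),
      cB' ⟨j.1, lt_of_lt_of_le j.2 hqr⟩
        = (wB ⟨j.1, lt_of_lt_of_le j.2 hqk⟩ : EuclideanSpace ℝ (Fin r)) := by
    intro j
    have hlt : ((⟨j.1, lt_of_lt_of_le j.2 hqr⟩ : Fin r) : ℕ) < finrank ℝ QS := j.2
    rw [hcB' _ hlt, dif_pos hlt]
  have haBval : ∀ jm : Fin m,
      aB ⟨jm.1, lt_of_lt_of_le jm.2 hmq⟩ = gQ (ρ.symm jm) := by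
    intro jm
    have hlt : ((⟨jm.1, lt_of_lt_of_le jm.2 hmq⟩ : Fin (finrank ℝ QS)) : ℕ) < m := jm.2
    rw [haB _ hlt, dif_pos hlt]
    show gQ (ρ.symm ⟨jm.1, hlt⟩) = gQ (ρ.symm jm)
    congr 1
  have hwBval : ∀ jm : Fin m,
      wB ⟨jm.1, lt_of_lt_of_le jm.2 hmk⟩ = gW (ρ.symm jm) := by
    intro jm
    have hlt : ((⟨jm.1, lt_of_lt_of_le jm.2 hmk⟩ : Fin (finrank ℝ WS)) : ℕ) < m := jm.2
    rw [hwB _ hlt, dif_pos hlt]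
    show gW (ρ.symm ⟨jm.1, hlt⟩) = gW (ρ.symm jm)
    congr 1
  have hZQW : ∀ x : EuclideanSpace ℝ (Fin r), x ∈ QS → ZZ x ∈ WS := by
    intro x hx
    obtain ⟨cvec, hcvec⟩ : ∃ c : Fin (finrank ℝ QS) → ℝ,
        (∑ j, c j • aB j) = (⟨x, hx⟩ : QS) := ⟨_, aB.sum_repr _⟩
    have h0 : ((∑ j, cvec j • aB j : QS) : EuclideanSpace ℝ (Fin r)) = x :=
      congrArg Subtype.val hcvec
    have hxE : x = ∑ j, cvec j • (aB j : EuclideanSpace ℝ (Fin r)) := by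
      rw [← h0, AddSubmonoidClass.coe_finset_sum]
      simp
    rw [hxE, map_sum]
    refine Submodule.sum_mem WS fun j _ => ?_
    rw [LinearIsometryEquiv.map_smul]
    refine Submodule.smul_mem WS _ ?_
    have h1 : (aB j : EuclideanSpace ℝ (Fin r)) = cB ⟨j.1, lt_of_lt_of_le j.2 hqr⟩ :=
      (hcBval j).symm
    rw [h1, hZc, hcB'val j]
    exact (wB _).2
  have hgQval : ∀ (i : Fin r) (hi : eigL (Vᵀ * U) i ≠ 0),
      ((gQ ⟨i, hi⟩ : QS) : EuclideanSpace ℝ (Fin r)) = pbB i := fun _ _ => rfl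
  have hgWval : ∀ (i : Fin r) (hi : eigL (Vᵀ * U) i ≠ 0),
      ((gW ⟨i, hi⟩ : WS) : EuclideanSpace ℝ (Fin r)) = pbB i := fun _ _ => rfl
  have hZpb : ∀ i, eigL (Vᵀ * U) i ≠ 0 → ZZ (pbB i) = pbB i := by
    intro i hi
    have hj0q : ((ρ ⟨i, hi⟩ : Fin m) : ℕ) < finrank ℝ QS := lt_of_lt_of_le (ρ ⟨i, hi⟩).2 hmq
    have hj0r : ((ρ ⟨i, hi⟩ : Fin m) : ℕ) < r := lt_of_lt_of_le hj0q hqr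
    have e2 := haBval (ρ ⟨i, hi⟩)
    rw [Equiv.symm_apply_apply] at e2
    have h1 : cB ⟨((ρ ⟨i, hi⟩ : Fin m) : ℕ), hj0r⟩ = pbB i := by
      calc cB ⟨((ρ ⟨i, hi⟩ : Fin m) : ℕ), hj0r⟩
          = ((aB ⟨((ρ ⟨i, hi⟩ : Fin m) : ℕ), hj0q⟩ : QS) : EuclideanSpace ℝ (Fin r)) :=
            hcBval ⟨((ρ ⟨i, hi⟩ : Fin m) : ℕ), hj0q⟩
        _ = ((gQ ⟨i, hi⟩ : QS) : EuclideanSpace ℝ (Fin r)) := congrArg _ e2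
        _ = pbB i := hgQval i hi
    have e3 := hwBval (ρ ⟨i, hi⟩)
    rw [Equiv.symm_apply_apply] at e3
    have h2 : cB' ⟨((ρ ⟨i, hi⟩ : Fin m) : ℕ), hj0r⟩ = pbB i := by
      calc cB' ⟨((ρ ⟨i, hi⟩ : Fin m) : ℕ), hj0r⟩
          = ((wB ⟨((ρ ⟨i, hi⟩ : Fin m) : ℕ), lt_of_lt_of_le hj0q hqk⟩ : WS) :
              EuclideanSpace ℝ (Fin r)) := hcB'val ⟨((ρ ⟨i, hi⟩ : Fin m) : ℕ), hj0q⟩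
        _ = ((gW ⟨i, hi⟩ : WS) : EuclideanSpace ℝ (Fin r)) := congrArg _ e3
        _ = pbB i := hgWval i hi
    rw [← h1, hZc, h2, h1]
  -- assemble R
  refine ⟨O * Tᵀ, ?_, ?_, ?_, ?_⟩
  · rw [Matrix.transpose_mul, Matrix.transpose_transpose, Matrix.mul_assoc,
      ← Matrix.mul_assoc Oᵀ O Tᵀ, hOt, Matrix.one_mul, hTtt]
  · rw [Matrix.transpose_mul, Matrix.transpose_transpose, Matrix.mul_assoc,
      ← Matrix.mul_assoc Tᵀ T Oᵀ, hTt, Matrix.one_mul, hOtt]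
  · -- PSD of (V R)ᵀ U = T P = P
    have hPs : Pᵀ = P := by rw [← ctr]; exact hPpsd.1
    have hVRtU : (V * (O * Tᵀ))ᵀ * U = T * P := by
      rw [Matrix.transpose_mul, Matrix.transpose_mul, Matrix.transpose_transpose,
        Matrix.mul_assoc, Matrix.mul_assoc]
      rw [← Matrix.mul_assoc Oᵀ Vᵀ U]
      have : Oᵀ * Vᵀ * U = P := by
        rw [Matrix.mul_assoc, hMOP, ← Matrix.mul_assoc, hOt, Matrix.one_mul]
      rw [this]
    have hcoeff : ∀ (x : Fin r → ℝ) i, eigV (Vᵀ * U) i ⬝ᵥ (P *ᵥ x)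
        = Real.sqrt (eigL (Vᵀ * U) i) * (eigV (Vᵀ * U) i ⬝ᵥ x) := by
      intro x i
      rw [Matrix.dotProduct_mulVec]
      have : eigV (Vᵀ * U) i ᵥ* P = Real.sqrt (eigL (Vᵀ * U) i) • eigV (Vᵀ * U) i := by
        rw [← hPs, Matrix.vecMul_transpose, hPmv]
      rw [this, smul_dotProduct, smul_eq_mul]
    have hTP : T * P = P := by
      apply ext_mulVec
      intro x
      rw [← Matrix.mulVec_mulVec]
      have h1 : T *ᵥ (P *ᵥ x) = ⇑(ZZ (WithLp.toLp 2 (P *ᵥ x))) :=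
        hTmv (WithLp.toLp 2 (P *ᵥ x))
      rw [h1]
      have hzE : WithLp.toLp 2 (P *ᵥ x)
          = ∑ i, (eigV (Vᵀ * U) i ⬝ᵥ (P *ᵥ x)) • pbB i := by
        apply (WithLp.linearEquiv 2 ℝ (Fin r → ℝ)).injective
        change WithLp.ofLp (WithLp.toLp 2 (P *ᵥ x))
          = WithLp.ofLp (∑ i, (eigV (Vᵀ * U) i ⬝ᵥ (P *ᵥ x)) • pbB i)
        simp only [WithLp.linearEquiv_apply, WithLp.ofLp_sum, WithLp.ofLp_smul, WithLp.ofLp_toLp]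
        exact expand_onb pbB (P *ᵥ x)
      rw [hzE, map_sum]
      have hterm : ∀ i, ZZ ((eigV (Vᵀ * U) i ⬝ᵥ (P *ᵥ x)) • pbB i)
          = (eigV (Vᵀ * U) i ⬝ᵥ (P *ᵥ x)) • pbB i := by
        intro i
        rw [LinearIsometryEquiv.map_smul]
        by_cases hi : eigL (Vᵀ * U) i = 0
        · rw [hcoeff, hi, Real.sqrt_zero, zero_mul, zero_smul, zero_smul]
        · rw [hZpb i hi]
      simp_rw [hterm]
      rw [← hzE]
    rw [hVRtU, hTP]
    exact hPpsd
  · -- (V R) Pi = V R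
    have hVRt : (V * (O * Tᵀ))ᵀ = T * (V * O)ᵀ := by
      rw [Matrix.transpose_mul, Matrix.transpose_mul, Matrix.transpose_transpose,
        Matrix.transpose_mul, Matrix.mul_assoc]
    have hfix : PiU U * (V * (O * Tᵀ))ᵀ = (V * (O * Tᵀ))ᵀ := by
      apply ext_mulVec
      intro y
      rw [← Matrix.mulVec_mulVec]
      have hcol : (V * (O * Tᵀ))ᵀ *ᵥ y
          = ⇑(ZZ (WithLp.toLp 2 ((V * O)ᵀ *ᵥ y))) := by
        rw [hVRt, ← Matrix.mulVec_mulVec]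
        exact hTmv (WithLp.toLp 2 ((V * O)ᵀ *ᵥ y))
      rw [hcol]
      have hmem : ZZ (WithLp.toLp 2 ((V * O)ᵀ *ᵥ y)) ∈ WS :=
        hZQW _ (hQSmem y)
      obtain ⟨y', hy'⟩ := hmem
      have hy'' : (Uᵀ *ᵥ y' : Fin r → ℝ)
          = ⇑(ZZ (WithLp.toLp 2 ((V * O)ᵀ *ᵥ y))) :=
        congrArg (fun w : EuclideanSpace ℝ (Fin r) => ⇑w) hy'
      rw [← hy'']
      apply PiU_fix
      intro i hi
      exact dot_eig0_transpose_mulVec U hi y'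
    have := congrArg Matrix.transpose hfix
    rw [Matrix.transpose_mul, Matrix.transpose_transpose, PiU_symm] at this
    exact this
end construct
section final
open Matrix
variable {d r : ℕ}

private lemma frobNorm_sq {d₁ d₂ : ℕ} (A : Matrix (Fin d₁) (Fin d₂) ℝ) :
    frobNorm A ^ 2 = (Aᵀ * A).trace := by
  rw [frobNorm, Real.sq_sqrt (Finset.sum_nonneg fun i _ =>
    Finset.sum_nonneg fun j _ => sq_nonneg (A i j))]
  rw [Matrix.trace]
  simp only [Matrix.diag_apply, Matrix.mul_apply, Matrix.transpose_apply, sq]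
  rw [Finset.sum_comm]

private lemma trace_mul_orth {d₁ d₂ : ℕ} (X : Matrix (Fin d₁) (Fin d₂) ℝ)
    (Q : Matrix (Fin d₂) (Fin d₂) ℝ) (hQ : Q * Qᵀ = 1) :
    ((X * Q)ᵀ * (X * Q)).trace = (Xᵀ * X).trace := by
  rw [Matrix.transpose_mul]
  rw [show Qᵀ * Xᵀ * (X * Q) = Qᵀ * ((Xᵀ * X) * Q) from by simp [Matrix.mul_assoc],
    Matrix.trace_mul_comm, show Xᵀ * X * Q * Qᵀ = (Xᵀ * X) * (Q * Qᵀ) from by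
      simp [Matrix.mul_assoc], hQ, Matrix.mul_one]

theorem statement5 {d r : ℕ} (U V : Matrix (Fin d) (Fin r) ℝ)
    (hU : U.rank = min r d) :
    sInf {x : ℝ | ∃ R : Matrix (Fin r) (Fin r) ℝ, Rᵀ * R = 1 ∧
        x = frobNorm (U * R - V) ^ 2}
      ≤ frobNorm (U * Uᵀ - V * Vᵀ) ^ 2 / (2 * (Real.sqrt 2 - 1) * sigmaMin U ^ 2) := by
  have hs2 : Real.sqrt 2 ^ 2 = 2 := Real.sq_sqrt (by norm_num)
  have hs0 : 0 ≤ Real.sqrt 2 := Real.sqrt_nonneg 2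
  have hs1 : 1 < Real.sqrt 2 := by nlinarith
  have hbdd : BddBelow {x : ℝ | ∃ R : Matrix (Fin r) (Fin r) ℝ, Rᵀ * R = 1 ∧
      x = frobNorm (U * R - V) ^ 2} := by
    refine ⟨0, ?_⟩
    rintro x ⟨R, hR, rfl⟩
    exact sq_nonneg _
  by_cases hU0 : U = 0
  · -- degenerate case : r = 0 or d = 0
    have hmin : min r d = 0 := by
      rw [← hU, hU0, Matrix.rank_zero]
    have hzero : ∀ A : Matrix (Fin d) (Fin r) ℝ, frobNorm A = 0 := by
      intro A
      rw [frobNorm]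
      rcases Nat.min_eq_zero_iff.mp hmin with h | h
      · subst h
        simp
      · subst h
        simp
    have h1 : sInf {x : ℝ | ∃ R : Matrix (Fin r) (Fin r) ℝ, Rᵀ * R = 1 ∧
        x = frobNorm (U * R - V) ^ 2} ≤ 0 := by
      refine csInf_le hbdd ⟨1, by simp, ?_⟩
      rw [hzero]
      norm_num
    refine le_trans h1 (div_nonneg (sq_nonneg _) ?_)
    have h2 := sigmaMin_nonneg U
    nlinarith [sq_nonneg (sigmaMin U)]
  · -- main case
    have hσ : 0 < sigmaMin U := sigmaMin_pos U hU0
    obtain ⟨R, hR1, hR2, hPSD, hFix⟩ := exists_good_R U V hU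
    have hcore := core_ineq U (V * R) (PiU U) (sigmaMin U) hPSD hFix
      (U_mul_PiU U) (PiU_psd_diff U)
    have hmem : frobNorm (U * Rᵀ - V) ^ 2 ∈ {x : ℝ | ∃ R : Matrix (Fin r) (Fin r) ℝ,
        Rᵀ * R = 1 ∧ x = frobNorm (U * R - V) ^ 2} :=
      ⟨Rᵀ, by rw [Matrix.transpose_transpose]; exact hR2, rfl⟩
    have h1 : sInf {x : ℝ | ∃ R : Matrix (Fin r) (Fin r) ℝ, Rᵀ * R = 1 ∧
        x = frobNorm (U * R - V) ^ 2} ≤ frobNorm (U * Rᵀ - V) ^ 2 := csInf_le hbdd hmem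
    have hform : (U * Rᵀ - V) = (U - V * R) * Rᵀ := by
      rw [Matrix.sub_mul, Matrix.mul_assoc, hR2, Matrix.mul_one]
    have h2 : frobNorm (U * Rᵀ - V) ^ 2 = ((V * R - U)ᵀ * (V * R - U)).trace := by
      rw [frobNorm_sq, hform,
        trace_mul_orth _ _ (by rw [Matrix.transpose_transpose]; exact hR1)]
      rw [show U - V * R = -(V * R - U) from (neg_sub _ _).symm, Matrix.transpose_neg,
        Matrix.neg_mul, Matrix.mul_neg, neg_neg]
    have hWW : (V * R) * (V * R)ᵀ = V * Vᵀ := by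
      rw [Matrix.transpose_mul, show V * R * (Rᵀ * Vᵀ) = V * (R * Rᵀ) * Vᵀ from by
        simp [Matrix.mul_assoc], hR2, Matrix.mul_one]
    have h3 : frobNorm (U * Uᵀ - V * Vᵀ) ^ 2
        = ((V * R * (V * R)ᵀ - U * Uᵀ) * (V * R * (V * R)ᵀ - U * Uᵀ)ᵀ).trace := by
      rw [frobNorm_sq, hWW,
        show V * Vᵀ - U * Uᵀ = -(U * Uᵀ - V * Vᵀ) from (neg_sub _ _).symm,
        Matrix.transpose_neg, Matrix.neg_mul, Matrix.mul_neg, neg_neg,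
        Matrix.trace_mul_comm]
    have hpos : 0 < 2 * (Real.sqrt 2 - 1) * sigmaMin U ^ 2 :=
      mul_pos (mul_pos two_pos (by linarith)) (pow_pos hσ 2)
    refine le_trans h1 ?_
    rw [h2, le_div_iff₀ hpos, h3]
    linarith [hcore]
end final
end

section
/- Let X_⋆ ∈ S^d be positive semidefinite of rank r with top-r eigenvector matrix V_⋆ ∈ R^{d×r} (orthonormal columns spanning the column space of X_⋆) and let V_⊥ ∈ R^{d×(d−r)} span the orthogonal complement. Let U ∈ R^{d×r} have left singular vector matrix V_U. Suppose ‖V_⊥^T V_U‖ ≤ 1/√2. Then for any matrix norm |||·||| satisfying |||XYZ||| ≤ ‖X‖ |||Y||| ‖Z‖, the inequalities hold: (a) |||V_⊥^T UU^T V_⊥||| ≤ 2 ‖V_⊥^T V_U‖ · |||V_⋆^T (UU^T − X_⋆) V_⊥|||, and (b) |||UU^T − X_⋆||| ≤ 2(1 + ‖V_⊥^T V_U‖) · |||V_⋆^T (UU^T − X_⋆)|||. -/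
open scoped BigOperators
open Matrix

section SpecAux
open scoped Matrix.Norms.L2Operator

lemma specNorm_eq_norm {m n : ℕ} (A : Matrix (Fin m) (Fin n) ℝ) : specNorm A = ‖A‖ := rfl

lemma spec_nonneg {m n : ℕ} (A : Matrix (Fin m) (Fin n) ℝ) : 0 ≤ specNorm A := by
  rw [specNorm_eq_norm]; exact norm_nonneg _

lemma spec_mul {m n p : ℕ} (A : Matrix (Fin m) (Fin n) ℝ) (B : Matrix (Fin n) (Fin p) ℝ) :
    specNorm (A * B) ≤ specNorm A * specNorm B := by
  simpa only [specNorm_eq_norm] using Matrix.l2_opNorm_mul A B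

lemma spec_transpose {m n : ℕ} (A : Matrix (Fin m) (Fin n) ℝ) : specNorm Aᵀ = specNorm A := by
  rw [specNorm_eq_norm, specNorm_eq_norm, ← Matrix.conjTranspose_eq_transpose_of_trivial,
    Matrix.l2_opNorm_conjTranspose]

lemma spec_one_le {n : ℕ} : specNorm (1 : Matrix (Fin n) (Fin n) ℝ) ≤ 1 := by
  have h := Matrix.l2_opNorm_conjTranspose_mul_self (1 : Matrix (Fin n) (Fin n) ℝ)
  rw [conjTranspose_one, one_mul] at h
  rw [specNorm_eq_norm]
  nlinarith [norm_nonneg (1 : Matrix (Fin n) (Fin n) ℝ)]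

lemma spec_orth {m n : ℕ} (A : Matrix (Fin m) (Fin n) ℝ) (h : Aᵀ * A = 1) : specNorm A ≤ 1 := by
  have h2 := Matrix.l2_opNorm_conjTranspose_mul_self A
  rw [Matrix.conjTranspose_eq_transpose_of_trivial, h] at h2
  have h3 := spec_one_le (n := n)
  rw [specNorm_eq_norm] at h3 ⊢
  nlinarith [norm_nonneg A]

end SpecAux

lemma eval_charpoly_neg {n : ℕ} (Y : Matrix (Fin n) (Fin n) ℝ) (x : ℝ) :
    ((-Y).charpoly).eval x = (Y + x • 1).det := by
  have h : ((-Y).charpoly).eval x = (Polynomial.evalRingHom x) ((Matrix.charmatrix (-Y)).det) := rfl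
  rw [h, RingHom.map_det]
  congr 1
  ext i j
  by_cases hij : i = j
  · subst hij
    simp [Matrix.charmatrix_apply, Matrix.one_apply, Matrix.diagonal_apply]
    ring
  · simp [Matrix.charmatrix_apply, Matrix.one_apply, Matrix.diagonal_apply, hij]

lemma exists_small_invertible {n : ℕ} (Y : Matrix (Fin n) (Fin n) ℝ) {η : ℝ} (hη : 0 < η) :
    ∃ ε : ℝ, 0 < ε ∧ ε < η ∧ IsUnit (Y + ε • 1).det := by
  have hfin : {x : ℝ | (Y + x • 1).det = 0}.Finite := by
    have hsub : {x : ℝ | (Y + x • 1).det = 0} ⊆ {x : ℝ | ((-Y).charpoly).IsRoot x} := by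
      intro x hx
      simp only [Set.mem_setOf_eq, Polynomial.IsRoot, eval_charpoly_neg]
      exact hx
    exact (Polynomial.finite_setOf_isRoot (Matrix.charpoly_monic (-Y)).ne_zero).subset hsub
  obtain ⟨ε, hε⟩ := ((Set.Ioo_infinite hη).diff hfin).nonempty
  refine ⟨ε, hε.1.1, hε.1.2, isUnit_iff_ne_zero.mpr ?_⟩
  exact hε.2

section NAux

variable (N : ∀ m n : ℕ, Matrix (Fin m) (Fin n) ℝ → ℝ)
variable (hN0 : ∀ m n (X : Matrix (Fin m) (Fin n) ℝ), 0 ≤ N m n X)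
variable (hNadd : ∀ m n (X Y : Matrix (Fin m) (Fin n) ℝ), N m n (X + Y) ≤ N m n X + N m n Y)
variable (hNsmul : ∀ m n (c : ℝ) (X : Matrix (Fin m) (Fin n) ℝ), N m n (c • X) = |c| * N m n X)
variable (hNmul : ∀ m n p q (X : Matrix (Fin m) (Fin n) ℝ) (Y : Matrix (Fin n) (Fin p) ℝ)
      (Z : Matrix (Fin p) (Fin q) ℝ),
    N m q (X * Y * Z) ≤ specNorm X * N n p Y * specNorm Z)

include hN0 hNmul in
lemma N_mul_left {m n p : ℕ} (X : Matrix (Fin m) (Fin n) ℝ) (Y : Matrix (Fin n) (Fin p) ℝ) :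
    N m p (X * Y) ≤ specNorm X * N n p Y := by
  have h := hNmul m n p p X Y 1
  rw [Matrix.mul_one] at h
  refine h.trans ?_
  have h1 : specNorm X * N n p Y * specNorm (1 : Matrix (Fin p) (Fin p) ℝ)
      ≤ specNorm X * N n p Y * 1 := by
    apply mul_le_mul_of_nonneg_left spec_one_le
    exact mul_nonneg (spec_nonneg X) (hN0 _ _ _)
  linarith

include hN0 hNmul in
lemma N_mul_right {m n p : ℕ} (Y : Matrix (Fin m) (Fin n) ℝ) (Z : Matrix (Fin n) (Fin p) ℝ) :
    N m p (Y * Z) ≤ N m n Y * specNorm Z := by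
  have h := hNmul m m n p 1 Y Z
  rw [Matrix.one_mul] at h
  refine h.trans ?_
  have h1 : specNorm (1 : Matrix (Fin m) (Fin m) ℝ) * N m n Y * specNorm Z
      ≤ 1 * (N m n Y * specNorm Z) := by
    rw [mul_assoc]
    apply mul_le_mul_of_nonneg_right spec_one_le
    exact mul_nonneg (hN0 _ _ _) (spec_nonneg Z)
  linarith

open scoped MatrixOrder in
include hN0 hNmul in
lemma N_transpose_inv {n : ℕ} (W : Matrix (Fin n) (Fin n) ℝ) (hW : IsUnit W.det) :
    N n n Wᵀ ≤ N n n W := by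
  have hps : (W * Wᵀ).PosSemidef := by
    have h := Matrix.posSemidef_self_mul_conjTranspose W
    rwa [Matrix.conjTranspose_eq_transpose_of_trivial] at h
  set S := CFC.sqrt (W * Wᵀ) with hSdef
  have hSS : S * S = W * Wᵀ := CFC.sqrt_mul_sqrt_self _ hps.nonneg
  have hSh : Sᵀ = S := by
    have h := (CFC.sqrt_nonneg (W * Wᵀ)).posSemidef.1
    rwa [Matrix.IsHermitian, Matrix.conjTranspose_eq_transpose_of_trivial] at h
  have hdetS : IsUnit S.det := by
    have h1 : S.det * S.det = W.det * W.det := by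
      have h := congrArg Matrix.det hSS
      rwa [Matrix.det_mul, Matrix.det_mul, Matrix.det_transpose] at h
    rw [isUnit_iff_ne_zero] at hW ⊢
    intro h
    rw [h, mul_zero] at h1
    exact hW (mul_self_eq_zero.mp h1.symm)
  set O := S⁻¹ * W with hOdef
  have hinvT : (S⁻¹)ᵀ = S⁻¹ := by
    rw [Matrix.transpose_nonsing_inv, hSh]
  have hOOt : O * Oᵀ = 1 := by
    calc O * Oᵀ = S⁻¹ * (W * Wᵀ) * S⁻¹ := by
          rw [hOdef, Matrix.transpose_mul, hinvT]
          noncomm_ring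
      _ = S⁻¹ * S * (S * S⁻¹) := by rw [← hSS]; noncomm_ring
      _ = 1 := by rw [Matrix.nonsing_inv_mul S hdetS, Matrix.mul_nonsing_inv S hdetS, one_mul]
  have hSO : S * O = W := by
    rw [hOdef, ← Matrix.mul_assoc, Matrix.mul_nonsing_inv S hdetS, one_mul]
  have hWt : Wᵀ = Oᵀ * W * Oᵀ := by
    calc Wᵀ = (S * O)ᵀ := by rw [hSO]
      _ = Oᵀ * S := by rw [Matrix.transpose_mul, hSh]
      _ = Oᵀ * S * (O * Oᵀ) := by rw [hOOt, mul_one]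
      _ = Oᵀ * (S * O) * Oᵀ := by noncomm_ring
      _ = Oᵀ * W * Oᵀ := by rw [hSO]
  have hOt : specNorm Oᵀ ≤ 1 := by
    apply spec_orth
    rw [Matrix.transpose_transpose]
    exact hOOt
  have hb := hNmul n n n n Oᵀ W Oᵀ
  rw [← hWt] at hb
  refine hb.trans ?_
  nlinarith [mul_nonneg (mul_nonneg (sub_nonneg.mpr hOt) (hN0 n n W)) (spec_nonneg Oᵀ),
    mul_nonneg (sub_nonneg.mpr hOt) (hN0 n n W)]

include hN0 hNadd hNsmul hNmul in
lemma N_transpose {n : ℕ} (Y : Matrix (Fin n) (Fin n) ℝ) : N n n Yᵀ ≤ N n n Y := by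
  refine le_of_forall_pos_le_add fun δ hδ => ?_
  set c := N n n (1 : Matrix (Fin n) (Fin n) ℝ) with hcdef
  have hc : 0 ≤ c := hN0 _ _ _
  have hη : 0 < δ / (2 * c + 1) := div_pos hδ (by linarith)
  obtain ⟨ε, hεpos, hεlt, hdet⟩ := exists_small_invertible Y hη
  have key : N n n ((Y + ε • 1)ᵀ) ≤ N n n (Y + ε • 1) := N_transpose_inv N hN0 hNmul _ hdet
  have h2 : (Y + ε • 1)ᵀ = Yᵀ + ε • 1 := by
    rw [Matrix.transpose_add, Matrix.transpose_smul, Matrix.transpose_one]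
  have h1 : N n n Yᵀ ≤ N n n (Yᵀ + ε • 1) + ε * c := by
    have he : Yᵀ = (Yᵀ + ε • 1) + (-ε) • (1 : Matrix (Fin n) (Fin n) ℝ) := by
      rw [add_assoc, ← add_smul, add_neg_cancel, zero_smul, add_zero]
    calc N n n Yᵀ = N n n ((Yᵀ + ε • 1) + (-ε) • 1) := by rw [← he]
      _ ≤ N n n (Yᵀ + ε • 1) + N n n ((-ε) • (1 : Matrix (Fin n) (Fin n) ℝ)) := hNadd _ _ _ _
      _ = N n n (Yᵀ + ε • 1) + ε * c := by rw [hNsmul, abs_neg, abs_of_pos hεpos]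
  have h4 : N n n (Y + ε • 1) ≤ N n n Y + ε * c := by
    calc N n n (Y + ε • 1) ≤ N n n Y + N n n (ε • (1 : Matrix (Fin n) (Fin n) ℝ)) := hNadd _ _ _ _
      _ = N n n Y + ε * c := by rw [hNsmul, abs_of_pos hεpos]
  have hεδ : ε * (2 * c + 1) < δ := by
    rw [← lt_div_iff₀ (by linarith : (0:ℝ) < 2 * c + 1)]
    exact hεlt
  rw [← h2] at h1
  nlinarith

end NAux


set_option maxHeartbeats 2000000 in
theorem statement6 {d r : ℕ} (hrd : r ≤ d)
    (Xs : Matrix (Fin d) (Fin d) ℝ) (hXpsd : Xs.PosSemidef) (hXrank : Xs.rank = r)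
    (Vs : Matrix (Fin d) (Fin r) ℝ) (Vp : Matrix (Fin d) (Fin (d - r)) ℝ)
    (hVs : Vsᵀ * Vs = 1) (hVsX : Vs * Vsᵀ * Xs = Xs)
    (hVp : Vpᵀ * Vp = 1) (hVsVp : Vsᵀ * Vp = 0)
    (U VU : Matrix (Fin d) (Fin r) ℝ)
    (hVU : VUᵀ * VU = 1) (hVUU : VU * VUᵀ * U = U)
    (hangle : specNorm (Vpᵀ * VU) ≤ 1 / Real.sqrt 2)
    (N : ∀ m n : ℕ, Matrix (Fin m) (Fin n) ℝ → ℝ)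
    (hN0 : ∀ m n (X : Matrix (Fin m) (Fin n) ℝ), 0 ≤ N m n X)
    (hNadd : ∀ m n (X Y : Matrix (Fin m) (Fin n) ℝ), N m n (X + Y) ≤ N m n X + N m n Y)
    (hNsmul : ∀ m n (c : ℝ) (X : Matrix (Fin m) (Fin n) ℝ), N m n (c • X) = |c| * N m n X)
    (hNmul : ∀ m n p q (X : Matrix (Fin m) (Fin n) ℝ) (Y : Matrix (Fin n) (Fin p) ℝ)
        (Z : Matrix (Fin p) (Fin q) ℝ),
      N m q (X * Y * Z) ≤ specNorm X * N n p Y * specNorm Z) :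
    N (d - r) (d - r) (Vpᵀ * (U * Uᵀ) * Vp)
        ≤ 2 * specNorm (Vpᵀ * VU) * N r (d - r) (Vsᵀ * (U * Uᵀ - Xs) * Vp) ∧
      N d d (U * Uᵀ - Xs)
        ≤ 2 * (1 + specNorm (Vpᵀ * VU)) * N r d (Vsᵀ * (U * Uᵀ - Xs)) := by
  -- basic orthogonality facts
  have hVpVs : Vpᵀ * Vs = 0 := by
    have h := congrArg Matrix.transpose hVsVp
    rwa [Matrix.transpose_mul, Matrix.transpose_transpose, Matrix.transpose_zero] at h
  have hone : Vs * Vsᵀ + Vp * Vpᵀ = (1 : Matrix (Fin d) (Fin d) ℝ) := by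
    have e : Fin d ≃ Fin r ⊕ Fin (d - r) :=
      (finCongr (by omega : d = r + (d - r))).trans finSumFinEquiv.symm
    have hCtC : Matrix.fromRows Vsᵀ Vpᵀ * Matrix.fromCols Vs Vp = 1 := by
      rw [Matrix.fromRows_mul_fromCols, hVs, hVsVp, hVpVs, hVp]
      exact Matrix.fromBlocks_one
    have hCCt := (Matrix.fromCols_mul_fromRows_eq_one_comm e Vs Vp Vsᵀ Vpᵀ).mpr hCtC
    rwa [Matrix.fromCols_mul_fromRows] at hCCt
  have hXsT : Xsᵀ = Xs := by
    have h := hXpsd.1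
    rwa [Matrix.IsHermitian, Matrix.conjTranspose_eq_transpose_of_trivial] at h
  have hVpXs : Vpᵀ * Xs = 0 := by
    have h : Vpᵀ * (Vs * Vsᵀ * Xs) = Vpᵀ * Vs * (Vsᵀ * Xs) := by simp only [Matrix.mul_assoc, Matrix.mul_add, Matrix.add_mul]
    rw [← hVsX, h, hVpVs, Matrix.zero_mul]
  have hXsVp : Xs * Vp = 0 := by
    have h := congrArg Matrix.transpose hVpXs
    rwa [Matrix.transpose_mul, Matrix.transpose_transpose, Matrix.transpose_zero, hXsT] at h
  have hBeq : Vsᵀ * (U * Uᵀ - Xs) * Vp = Vsᵀ * (U * Uᵀ) * Vp := by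
    rw [Matrix.mul_sub, Matrix.sub_mul]
    have h : Vsᵀ * Xs * Vp = 0 := by rw [Matrix.mul_assoc, hXsVp, Matrix.mul_zero]
    rw [h, sub_zero]
  -- spectral norm bounds
  have hε0 : 0 ≤ specNorm (Vpᵀ * VU) := spec_nonneg _
  have hε2 : specNorm (Vpᵀ * VU) * specNorm (Vpᵀ * VU) ≤ 1 / 2 := by
    have h2 : Real.sqrt 2 * Real.sqrt 2 = 2 := Real.mul_self_sqrt (by norm_num)
    have hs : 0 < Real.sqrt 2 := Real.sqrt_pos.mpr (by norm_num)
    have hh : 1 / Real.sqrt 2 * (1 / Real.sqrt 2) = 1 / 2 := by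
      rw [div_mul_div_comm, one_mul, h2]
    nlinarith [mul_le_mul hangle hangle hε0 (by positivity : (0:ℝ) ≤ 1 / Real.sqrt 2)]
  have hsVs : specNorm Vs ≤ 1 := spec_orth Vs hVs
  have hsVp : specNorm Vp ≤ 1 := spec_orth Vp hVp
  have hsVU : specNorm VU ≤ 1 := spec_orth VU hVU
  have hsVsT : specNorm Vsᵀ ≤ 1 := by rw [spec_transpose]; exact hsVs
  have hsVpT : specNorm Vpᵀ ≤ 1 := by rw [spec_transpose]; exact hsVp
  have hsVUT : specNorm VUᵀ ≤ 1 := by rw [spec_transpose]; exact hsVU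
  have hsVUtVp : specNorm (VUᵀ * Vp) = specNorm (Vpᵀ * VU) := by
    rw [← spec_transpose (Vpᵀ * VU), Matrix.transpose_mul, Matrix.transpose_transpose]
  have hsVUtVs : specNorm (VUᵀ * Vs) ≤ 1 := by
    refine (spec_mul VUᵀ Vs).trans ?_
    nlinarith [spec_nonneg VUᵀ, spec_nonneg Vs]
  -- part (a)
  have keyA : Vpᵀ * (U * Uᵀ) * Vp
      = Vpᵀ * VU * (VUᵀ * Vs) * (Vsᵀ * (U * Uᵀ) * Vp)
        + Vpᵀ * VU * (VUᵀ * Vp) * (Vpᵀ * (U * Uᵀ) * Vp) := by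
    have h1 : Vpᵀ * VU * (VUᵀ * Vs) * (Vsᵀ * (U * Uᵀ) * Vp)
          + Vpᵀ * VU * (VUᵀ * Vp) * (Vpᵀ * (U * Uᵀ) * Vp)
        = Vpᵀ * VU * VUᵀ * ((Vs * Vsᵀ + Vp * Vpᵀ) * (U * Uᵀ * Vp)) := by simp only [Matrix.mul_assoc, Matrix.mul_add, Matrix.add_mul]
    rw [h1, hone, Matrix.one_mul]
    have h2 : Vpᵀ * VU * VUᵀ * (U * Uᵀ * Vp) = Vpᵀ * (VU * VUᵀ * U * (Uᵀ * Vp)) := by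
      simp only [Matrix.mul_assoc, Matrix.mul_add, Matrix.add_mul]
    rw [h2, hVUU]
    simp only [Matrix.mul_assoc, Matrix.mul_add, Matrix.add_mul]
  have hs1 : specNorm (Vpᵀ * VU * (VUᵀ * Vs)) ≤ specNorm (Vpᵀ * VU) := by
    refine (spec_mul _ _).trans ?_
    nlinarith [spec_nonneg (Vpᵀ * VU)]
  have hs2 : specNorm (Vpᵀ * VU * (VUᵀ * Vp)) ≤ 1 / 2 := by
    refine (spec_mul _ _).trans ?_
    rw [hsVUtVp]
    exact hε2
  have parta : N (d - r) (d - r) (Vpᵀ * (U * Uᵀ) * Vp)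
      ≤ 2 * specNorm (Vpᵀ * VU) * N r (d - r) (Vsᵀ * (U * Uᵀ) * Vp) := by
    have hNA : N (d - r) (d - r) (Vpᵀ * (U * Uᵀ) * Vp)
        ≤ N (d - r) (d - r) (Vpᵀ * VU * (VUᵀ * Vs) * (Vsᵀ * (U * Uᵀ) * Vp))
          + N (d - r) (d - r) (Vpᵀ * VU * (VUᵀ * Vp) * (Vpᵀ * (U * Uᵀ) * Vp)) := by
      conv_lhs => rw [keyA]
      exact hNadd _ _ _ _
    have ht1 : N (d - r) (d - r) (Vpᵀ * VU * (VUᵀ * Vs) * (Vsᵀ * (U * Uᵀ) * Vp))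
        ≤ specNorm (Vpᵀ * VU) * N r (d - r) (Vsᵀ * (U * Uᵀ) * Vp) := by
      refine (N_mul_left N hN0 hNmul _ _).trans ?_
      exact mul_le_mul_of_nonneg_right hs1 (hN0 _ _ _)
    have ht2 : N (d - r) (d - r) (Vpᵀ * VU * (VUᵀ * Vp) * (Vpᵀ * (U * Uᵀ) * Vp))
        ≤ 1 / 2 * N (d - r) (d - r) (Vpᵀ * (U * Uᵀ) * Vp) := by
      refine (N_mul_left N hN0 hNmul _ _).trans ?_
      exact mul_le_mul_of_nonneg_right hs2 (hN0 _ _ _)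
    linarith
  constructor
  · rw [hBeq]
    exact parta
  -- part (b)
  · have hET : (U * Uᵀ - Xs)ᵀ = U * Uᵀ - Xs := by
      rw [Matrix.transpose_sub, Matrix.transpose_mul, Matrix.transpose_transpose, hXsT]
    have keyB : U * Uᵀ - Xs
        = Vs * (Vsᵀ * (U * Uᵀ - Xs))
          + (Vp * (Vpᵀ * (U * Uᵀ - Xs) * Vs) * Vsᵀ
            + Vp * (Vpᵀ * (U * Uᵀ - Xs) * Vp) * Vpᵀ) := by
      have h1 : Vs * (Vsᵀ * (U * Uᵀ - Xs))
            + (Vp * (Vpᵀ * (U * Uᵀ - Xs) * Vs) * Vsᵀ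
              + Vp * (Vpᵀ * (U * Uᵀ - Xs) * Vp) * Vpᵀ)
          = Vs * Vsᵀ * (U * Uᵀ - Xs)
            + Vp * Vpᵀ * ((U * Uᵀ - Xs) * (Vs * Vsᵀ + Vp * Vpᵀ)) := by simp only [Matrix.mul_assoc, Matrix.mul_add, Matrix.add_mul]
      rw [h1, hone, Matrix.mul_one]
      have h2 : Vs * Vsᵀ * (U * Uᵀ - Xs) + Vp * Vpᵀ * (U * Uᵀ - Xs)
          = (Vs * Vsᵀ + Vp * Vpᵀ) * (U * Uᵀ - Xs) := by simp only [Matrix.mul_assoc, Matrix.mul_add, Matrix.add_mul]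
      rw [h2, hone, Matrix.one_mul]
    have hT1 : N d d (Vs * (Vsᵀ * (U * Uᵀ - Xs))) ≤ N r d (Vsᵀ * (U * Uᵀ - Xs)) := by
      refine (N_mul_left N hN0 hNmul _ _).trans ?_
      nlinarith [hN0 r d (Vsᵀ * (U * Uᵀ - Xs)), spec_nonneg Vs]
    have hYle : N r (d - r) (Vsᵀ * (U * Uᵀ - Xs) * Vp) ≤ N r d (Vsᵀ * (U * Uᵀ - Xs)) := by
      refine (N_mul_right N hN0 hNmul _ _).trans ?_
      nlinarith [hN0 r d (Vsᵀ * (U * Uᵀ - Xs)), spec_nonneg Vp]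
    have hT2 : N d d (Vp * (Vpᵀ * (U * Uᵀ - Xs) * Vs) * Vsᵀ)
        ≤ N r d (Vsᵀ * (U * Uᵀ - Xs)) := by
      have hT2eq : Vp * (Vpᵀ * (U * Uᵀ - Xs) * Vs) * Vsᵀ
          = (Vs * (Vsᵀ * (U * Uᵀ - Xs) * Vp) * Vpᵀ)ᵀ := by
        simp only [Matrix.transpose_mul, Matrix.transpose_transpose, hET]
        simp only [Matrix.mul_assoc, Matrix.mul_add, Matrix.add_mul]
      rw [hT2eq]
      refine (N_transpose N hN0 hNadd hNsmul hNmul _).trans ?_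
      refine (hNmul d r (d - r) d Vs (Vsᵀ * (U * Uᵀ - Xs) * Vp) Vpᵀ).trans ?_
      have hYpos := hN0 r (d - r) (Vsᵀ * (U * Uᵀ - Xs) * Vp)
      have hstep : specNorm Vs * N r (d - r) (Vsᵀ * (U * Uᵀ - Xs) * Vp) * specNorm Vpᵀ
          ≤ N r (d - r) (Vsᵀ * (U * Uᵀ - Xs) * Vp) := by
        refine le_trans (mul_le_mul_of_nonneg_right
          (mul_le_of_le_one_left hYpos hsVs) (spec_nonneg Vpᵀ)) ?_
        exact mul_le_of_le_one_right hYpos hsVpT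
      exact hstep.trans hYle
    have hT3 : N d d (Vp * (Vpᵀ * (U * Uᵀ - Xs) * Vp) * Vpᵀ)
        ≤ 2 * specNorm (Vpᵀ * VU) * N r d (Vsᵀ * (U * Uᵀ - Xs)) := by
      have hAeq : Vpᵀ * (U * Uᵀ - Xs) * Vp = Vpᵀ * (U * Uᵀ) * Vp := by
        rw [Matrix.mul_sub, Matrix.sub_mul, hVpXs, Matrix.zero_mul, sub_zero]
      refine (hNmul d (d - r) (d - r) d Vp (Vpᵀ * (U * Uᵀ - Xs) * Vp) Vpᵀ).trans ?_
      have hApos := hN0 (d - r) (d - r) (Vpᵀ * (U * Uᵀ - Xs) * Vp)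
      have hstep : specNorm Vp * N (d - r) (d - r) (Vpᵀ * (U * Uᵀ - Xs) * Vp) * specNorm Vpᵀ
          ≤ N (d - r) (d - r) (Vpᵀ * (U * Uᵀ - Xs) * Vp) := by
        refine le_trans (mul_le_mul_of_nonneg_right
          (mul_le_of_le_one_left hApos hsVp) (spec_nonneg Vpᵀ)) ?_
        exact mul_le_of_le_one_right hApos hsVpT
      refine hstep.trans ?_
      rw [hAeq]
      refine parta.trans ?_
      rw [← hBeq]
      have := mul_le_mul_of_nonneg_left hYle (by linarith : (0:ℝ) ≤ 2 * specNorm (Vpᵀ * VU))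
      rw [hBeq] at this ⊢
      exact this
    have hsum : N d d (U * Uᵀ - Xs)
        ≤ N d d (Vs * (Vsᵀ * (U * Uᵀ - Xs)))
          + (N d d (Vp * (Vpᵀ * (U * Uᵀ - Xs) * Vs) * Vsᵀ)
            + N d d (Vp * (Vpᵀ * (U * Uᵀ - Xs) * Vp) * Vpᵀ)) := by
      conv_lhs => rw [keyB]
      refine (hNadd _ _ _ _).trans ?_
      have := hNadd d d (Vp * (Vpᵀ * (U * Uᵀ - Xs) * Vs) * Vsᵀ)
        (Vp * (Vpᵀ * (U * Uᵀ - Xs) * Vp) * Vpᵀ)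
      linarith
    have hM0 := hN0 r d (Vsᵀ * (U * Uᵀ - Xs))
    nlinarith [hT1, hT2, hT3, hsum]
end

section
/- Consider gradient descent U_{t+1} = U_t + μ M_t U_t with M_t = (A*A)(X_⋆ − U_t U_t^T) = (X_⋆ − U_t U_t^T) + E_t, where E_t = (A*A − I)(X_⋆ − U_t U_t^T). Let |||·||| be a norm satisfying |||XYZ||| ≤ ‖X‖|||Y|||‖Z‖. Assume ‖V_⊥^T V_{U_t}‖ ≤ 1/2, ‖U_t‖ ≤ √(2‖X_⋆‖), ‖X_⋆ − U_t U_t^T‖ ≤ σ_min(X_⋆)/48, ‖E_t‖ ≤ σ_min(X_⋆)/48, and μ ≤ 1/(1024 κ ‖X_⋆‖). Then |||V_⋆^T (U_{t+1}U_{t+1}^T − X_⋆)||| ≤ (1 − (μ/8)σ_min(X_⋆)) |||V_⋆^T (X_⋆ − U_t U_t^T)||| + 5μ‖X_⋆‖ |||E_t V_{U_t}|||. -/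
open scoped BigOperators
open Matrix

open Matrix
open scoped Matrix.Norms.L2Operator

noncomputable section StatementTenHelpers

lemma sn_inner_mulVec_left {a b : ℕ} (A : Matrix (Fin a) (Fin b) ℝ) (x : EuclideanSpace ℝ (Fin b)) (y : EuclideanSpace ℝ (Fin a)) :
    (inner ℝ ((EuclideanSpace.equiv (Fin a) ℝ).symm (A *ᵥ x)) y : ℝ) = inner ℝ x ((EuclideanSpace.equiv (Fin b) ℝ).symm (Aᵀ *ᵥ y)) := by
  simp [PiLp.inner_apply, Matrix.mulVec, dotProduct, Finset.mul_sum, Finset.sum_mul]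
  rw [Finset.sum_comm]
  congr 1; ext i; congr 1; ext j; ring

lemma sn_repr_sym {n : ℕ} {H : Matrix (Fin n) (Fin n) ℝ} (hH : H.IsHermitian) (x : EuclideanSpace ℝ (Fin n)) (j : Fin n) :
    hH.eigenvectorBasis.repr ((EuclideanSpace.equiv (Fin n) ℝ).symm (H *ᵥ x)) j
      = hH.eigenvalues j * hH.eigenvectorBasis.repr x j := by
  rw [OrthonormalBasis.repr_apply_apply, OrthonormalBasis.repr_apply_apply]
  rw [real_inner_comm, sn_inner_mulVec_left]
  have h1 : Hᵀ *ᵥ (hH.eigenvectorBasis j) = hH.eigenvalues j • ⇑(hH.eigenvectorBasis j) := by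
    rw [show Hᵀ = H from by rw [← conjTranspose_eq_transpose_of_trivial, hH]]
    exact hH.mulVec_eigenvectorBasis j
  rw [h1]
  rw [show (EuclideanSpace.equiv (Fin n) ℝ).symm (hH.eigenvalues j • ⇑(hH.eigenvectorBasis j))
      = hH.eigenvalues j • (hH.eigenvectorBasis j) from rfl, inner_smul_right, real_inner_comm]

lemma sn_norm_sq_eq_sum_repr {n : ℕ} {H : Matrix (Fin n) (Fin n) ℝ} (hH : H.IsHermitian)
    (y : EuclideanSpace ℝ (Fin n)) : ‖y‖ ^ 2 = ∑ i, hH.eigenvectorBasis.repr y i ^ 2 := by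
  rw [← hH.eigenvectorBasis.repr.norm_map y, EuclideanSpace.norm_eq, Real.sq_sqrt (by positivity)]
  simp [sq_abs]

lemma sn_inner_eq_sum_repr {n : ℕ} {H : Matrix (Fin n) (Fin n) ℝ} (hH : H.IsHermitian)
    (x y : EuclideanSpace ℝ (Fin n)) :
    (inner ℝ x y : ℝ) = ∑ i, hH.eigenvectorBasis.repr x i * hH.eigenvectorBasis.repr y i := by
  rw [show (inner ℝ x y : ℝ) = inner ℝ (hH.eigenvectorBasis.repr x) (hH.eigenvectorBasis.repr y) from
    (hH.eigenvectorBasis.repr.inner_map_map x y).symm]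
  rw [PiLp.inner_apply]
  simp
  exact Finset.sum_congr rfl fun i _ => mul_comm _ _

lemma sn_norm_le_of_eig {n : ℕ} {H : Matrix (Fin n) (Fin n) ℝ} (hH : H.IsHermitian) {c : ℝ} (hc : 0 ≤ c)
    (h : ∀ j, |hH.eigenvalues j| ≤ c) : ‖H‖ ≤ c := by
  rw [Matrix.l2_opNorm_def]
  refine ContinuousLinearMap.opNorm_le_bound _ hc (fun x => ?_)
  have hz : ((toEuclideanLin.trans LinearMap.toContinuousLinearMap) H) x
      = (EuclideanSpace.equiv (Fin n) ℝ).symm (H *ᵥ x) := rfl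
  rw [hz]
  have h1 : ‖(EuclideanSpace.equiv (Fin n) ℝ).symm (H *ᵥ x)‖ ^ 2 ≤ (c * ‖x‖) ^ 2 := by
    rw [sn_norm_sq_eq_sum_repr hH]
    have hterm : ∀ i ∈ Finset.univ, hH.eigenvectorBasis.repr ((EuclideanSpace.equiv (Fin n) ℝ).symm (H *ᵥ x)) i ^ 2
        ≤ c ^ 2 * hH.eigenvectorBasis.repr x i ^ 2 := by
      intro i _
      rw [sn_repr_sym hH x i, mul_pow]
      have h4 : hH.eigenvalues i ^ 2 ≤ c ^ 2 := by
        have := pow_le_pow_left₀ (abs_nonneg (hH.eigenvalues i)) (h i) 2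
        rwa [sq_abs] at this
      exact mul_le_mul_of_nonneg_right h4 (sq_nonneg _)
    calc (∑ i, hH.eigenvectorBasis.repr ((EuclideanSpace.equiv (Fin n) ℝ).symm (H *ᵥ x)) i ^ 2)
        ≤ ∑ i, c ^ 2 * hH.eigenvectorBasis.repr x i ^ 2 := Finset.sum_le_sum hterm
      _ = (c * ‖x‖) ^ 2 := by rw [← Finset.mul_sum, ← sn_norm_sq_eq_sum_repr hH]; ring
  have h2 : (0:ℝ) ≤ c * ‖x‖ := by positivity
  nlinarith [norm_nonneg ((EuclideanSpace.equiv (Fin n) ℝ).symm (H *ᵥ x))]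

lemma sn_eig_abs_le {n : ℕ} {H : Matrix (Fin n) (Fin n) ℝ} (hH : H.IsHermitian) {c : ℝ}
    (h : ∀ x : EuclideanSpace ℝ (Fin n), |(inner ℝ x ((EuclideanSpace.equiv (Fin n) ℝ).symm (H *ᵥ x)) : ℝ)| ≤ c * ‖x‖ ^ 2) :
    ∀ j, |hH.eigenvalues j| ≤ c := by
  intro j
  have h1 := h (hH.eigenvectorBasis j)
  have key : (inner ℝ (hH.eigenvectorBasis j) ((EuclideanSpace.equiv (Fin n) ℝ).symm (H *ᵥ (hH.eigenvectorBasis j))) : ℝ)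
      = hH.eigenvalues j := by
    rw [sn_inner_eq_sum_repr hH]
    have hterm : ∀ i, hH.eigenvectorBasis.repr ((EuclideanSpace.equiv (Fin n) ℝ).symm (H *ᵥ (hH.eigenvectorBasis j))) i
        = hH.eigenvalues i * hH.eigenvectorBasis.repr (hH.eigenvectorBasis j) i := fun i => sn_repr_sym hH _ i
    simp only [hterm, OrthonormalBasis.repr_self]
    simp [EuclideanSpace.single_apply]
  have h3 : ‖hH.eigenvectorBasis j‖ = 1 := hH.eigenvectorBasis.orthonormal.1 j
  rw [key, h3] at h1; simpa using h1

lemma sn_sym_norm_le {n : ℕ} {H : Matrix (Fin n) (Fin n) ℝ} (hH : H.IsHermitian) {c : ℝ} (hc : 0 ≤ c)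
    (h : ∀ x : EuclideanSpace ℝ (Fin n), |(inner ℝ x ((EuclideanSpace.equiv (Fin n) ℝ).symm (H *ᵥ x)) : ℝ)| ≤ c * ‖x‖ ^ 2) :
    ‖H‖ ≤ c := sn_norm_le_of_eig hH hc (sn_eig_abs_le hH h)

lemma sn_inner_abs_le_norm {n : ℕ} (H : Matrix (Fin n) (Fin n) ℝ) (x : EuclideanSpace ℝ (Fin n)) :
    |(inner ℝ x ((EuclideanSpace.equiv (Fin n) ℝ).symm (H *ᵥ x)) : ℝ)| ≤ ‖H‖ * ‖x‖ ^ 2 := by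
  calc |(inner ℝ x ((EuclideanSpace.equiv (Fin n) ℝ).symm (H *ᵥ x)) : ℝ)|
      ≤ ‖x‖ * ‖(EuclideanSpace.equiv (Fin n) ℝ).symm (H *ᵥ x)‖ := abs_real_inner_le_norm _ _
    _ ≤ ‖x‖ * (‖H‖ * ‖x‖) := by
        exact mul_le_mul_of_nonneg_left (Matrix.l2_opNorm_mulVec H x) (norm_nonneg x)
    _ = ‖H‖ * ‖x‖ ^ 2 := by ring

lemma sn_eig_mem {n : ℕ} {H : Matrix (Fin n) (Fin n) ℝ} (hH : H.IsHermitian)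
    (x : EuclideanSpace ℝ (Fin n)) (hx : x ≠ 0) (t : ℝ)
    (ht : (EuclideanSpace.equiv (Fin n) ℝ).symm (H *ᵥ x) = t • x) :
    ∃ j, hH.eigenvalues j = t := by
  have hj : ∃ j, hH.eigenvectorBasis.repr x j ≠ 0 := by
    by_contra hcon
    push_neg at hcon
    apply hx
    have h0 : hH.eigenvectorBasis.repr x = 0 := by
      ext j; exact hcon j
    have := hH.eigenvectorBasis.repr.map_eq_zero_iff.mp h0
    exact this
  obtain ⟨j, hj⟩ := hj
  refine ⟨j, ?_⟩
  have h1 := sn_repr_sym hH x j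
  rw [ht] at h1
  have h1' : t * hH.eigenvectorBasis.repr x j = hH.eigenvalues j * hH.eigenvectorBasis.repr x j := by
    simpa using h1
  exact (mul_right_cancel₀ hj h1').symm

lemma sn_norm_mulVec_sq {a b : ℕ} (A : Matrix (Fin a) (Fin b) ℝ) (x : EuclideanSpace ℝ (Fin b)) :
    ‖(EuclideanSpace.equiv (Fin a) ℝ).symm (A *ᵥ x)‖ ^ 2
      = inner ℝ x ((EuclideanSpace.equiv (Fin b) ℝ).symm ((Aᵀ * A) *ᵥ x)) := by
  rw [← real_inner_self_eq_norm_sq, sn_inner_mulVec_left]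
  congr 1
  show (EuclideanSpace.equiv (Fin b) ℝ).symm (Aᵀ *ᵥ (A *ᵥ x)) = _
  rw [Matrix.mulVec_mulVec]

lemma sn_normle {a b : ℕ} (A : Matrix (Fin a) (Fin b) ℝ) {c : ℝ} (hc : 0 ≤ c)
    (h : ∀ x : EuclideanSpace ℝ (Fin b),
      (inner ℝ x ((EuclideanSpace.equiv (Fin b) ℝ).symm ((Aᵀ * A) *ᵥ x)) : ℝ) ≤ c ^ 2 * ‖x‖ ^ 2) :
    ‖A‖ ≤ c := by
  rw [Matrix.l2_opNorm_def]
  refine ContinuousLinearMap.opNorm_le_bound _ hc (fun x => ?_)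
  have hz : ((toEuclideanLin.trans LinearMap.toContinuousLinearMap) A) x
      = (EuclideanSpace.equiv (Fin a) ℝ).symm (A *ᵥ x) := rfl
  rw [hz]
  have h1 := (sn_norm_mulVec_sq A x).trans_le (h x)
  have h2 : (0:ℝ) ≤ c * ‖x‖ := by positivity
  nlinarith [norm_nonneg ((EuclideanSpace.equiv (Fin a) ℝ).symm (A *ᵥ x)), norm_nonneg x]

lemma sn_euc_norm_sq {b : ℕ} (x : EuclideanSpace ℝ (Fin b)) : ‖x‖ ^ 2 = ∑ i, x i ^ 2 := by
  rw [EuclideanSpace.norm_eq, Real.sq_sqrt (by positivity)]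
  simp [sq_abs]

lemma sn_inner_diag {b : ℕ} (w : Fin b → ℝ) (x : EuclideanSpace ℝ (Fin b)) :
    (inner ℝ x ((EuclideanSpace.equiv (Fin b) ℝ).symm (diagonal w *ᵥ x)) : ℝ) = ∑ i, w i * x i ^ 2 := by
  rw [PiLp.inner_apply]
  simp [Matrix.mulVec_diagonal]
  congr 1; ext i; ring

lemma sn_norm_le_one_of_diag {a b : ℕ} (A : Matrix (Fin a) (Fin b) ℝ) (w : Fin b → ℝ)
    (hw : ∀ i, w i ≤ 1) (hA : Aᵀ * A = diagonal w) : ‖A‖ ≤ 1 := by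
  refine sn_normle A zero_le_one (fun x => ?_)
  rw [hA, sn_inner_diag, one_pow, one_mul, sn_euc_norm_sq]
  exact Finset.sum_le_sum fun i _ => by nlinarith [sq_nonneg (x i), hw i]

lemma sn_mul3_le {x y z x' y' z' : ℝ} (hx : x ≤ x') (hy : y ≤ y') (hz : z ≤ z')
    (hy0 : 0 ≤ y) (hz0 : 0 ≤ z) (hx'0 : 0 ≤ x') (hy'0 : 0 ≤ y') : x * y * z ≤ x' * y' * z' := by
  calc x * y * z ≤ x' * y * z :=
        mul_le_mul_of_nonneg_right (mul_le_mul_of_nonneg_right hx hy0) hz0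
    _ ≤ x' * y' * z := mul_le_mul_of_nonneg_right (mul_le_mul_of_nonneg_left hy hx'0) hz0
    _ ≤ x' * y' * z' := mul_le_mul_of_nonneg_left hz (mul_nonneg hx'0 hy'0)

lemma sn_normT {a b : ℕ} (A : Matrix (Fin a) (Fin b) ℝ) : ‖Aᵀ‖ = ‖A‖ := by
  rw [← conjTranspose_eq_transpose_of_trivial, Matrix.l2_opNorm_conjTranspose]

lemma transpose_factor {dd rr : ℕ} (A : Matrix (Fin dd) (Fin rr) ℝ) :
    ∃ X Z : Matrix (Fin rr) (Fin dd) ℝ, ‖X‖ ≤ 1 ∧ ‖Z‖ ≤ 1 ∧ X * A * Z = Aᵀ := by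
  classical
  have hH := Matrix.isHermitian_conjTranspose_mul_self A
  set lam := hH.eigenvalues with hlam
  have hpsd : Matrix.PosSemidef (Aᴴ * A) := Matrix.posSemidef_conjTranspose_mul_self A
  have hln : ∀ i, 0 ≤ lam i := fun i => hpsd.eigenvalues_nonneg i
  set Q : Matrix (Fin rr) (Fin rr) ℝ := (hH.eigenvectorUnitary : Matrix (Fin rr) (Fin rr) ℝ) with hQdef
  have hQ1 : Qᵀ * Q = 1 := by
    have h := Matrix.mem_unitaryGroup_iff'.mp hH.eigenvectorUnitary.2
    calc Qᵀ * Q = star Q * Q := by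
          rw [Matrix.star_eq_conjTranspose, Matrix.conjTranspose_eq_transpose_of_trivial]
      _ = 1 := h
  have hQ2 : Q * Qᵀ = 1 := by
    have h := Matrix.mem_unitaryGroup_iff.mp hH.eigenvectorUnitary.2
    calc Q * Qᵀ = Q * star Q := by
          rw [Matrix.star_eq_conjTranspose, Matrix.conjTranspose_eq_transpose_of_trivial]
      _ = 1 := h
  have hspec : Aᵀ * A = Q * diagonal lam * Qᵀ := by
    calc Aᵀ * A = Aᴴ * A := by rw [Matrix.conjTranspose_eq_transpose_of_trivial]
      _ = Q * diagonal (RCLike.ofReal ∘ lam) * (star Q) := hH.spectral_theorem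
      _ = Q * diagonal lam * Qᵀ := by
          rw [Matrix.star_eq_conjTranspose, Matrix.conjTranspose_eq_transpose_of_trivial]
          norm_num [RCLike.ofReal_real_eq_id, Function.comp]
  have f2 : (A * Q)ᵀ * (A * Q) = diagonal lam := by
    rw [Matrix.transpose_mul, hlam]
    calc Qᵀ * Aᵀ * (A * Q) = Qᵀ * (Aᵀ * A) * Q := by
          simp only [Matrix.mul_assoc]
      _ = Qᵀ * (Q * diagonal lam * Qᵀ) * Q := by rw [hspec]
      _ = (Qᵀ * Q) * diagonal lam * (Qᵀ * Q) := by
          simp only [Matrix.mul_assoc]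
      _ = diagonal lam := by rw [hQ1, one_mul, mul_one]
  set g : Fin rr → ℝ := fun i => if lam i = 0 then 0 else (Real.sqrt (lam i))⁻¹ with hg
  set k : Fin rr → ℝ := fun i => if lam i = 0 then 0 else 1 with hk
  set W : Matrix (Fin dd) (Fin rr) ℝ := A * Q * diagonal g with hW
  set Dh : Matrix (Fin rr) (Fin rr) ℝ := diagonal (fun i => Real.sqrt (lam i)) with hDh
  have hcol : ∀ j, lam j = 0 → ∀ i, (A * Q) i j = 0 := by
    intro j hj i
    have h0 : ((A * Q)ᵀ * (A * Q)) j j = 0 := by rw [f2]; simp [Matrix.diagonal_apply_eq, hj]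
    have h1 : ∑ i', (A * Q) i' j ^ 2 = 0 := by
      rw [← h0, Matrix.mul_apply]
      apply Finset.sum_congr rfl
      intro x _
      rw [Matrix.transpose_apply]; ring
    have := (Finset.sum_eq_zero_iff_of_nonneg (fun i' _ => sq_nonneg ((A * Q) i' j))).mp h1 i
      (Finset.mem_univ i)
    exact pow_eq_zero_iff (n := 2) (by norm_num) |>.mp this
  have f3 : A * Q * diagonal k = A * Q := by
    ext i j
    rw [Matrix.mul_diagonal]
    by_cases hj : lam j = 0
    · simp [hk, hj, hcol j hj i]
    · simp [hk, hj]
  have c1 : Wᵀ * (A * Q) = Dh := by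
    rw [hW, Matrix.transpose_mul, Matrix.diagonal_transpose, Matrix.mul_assoc, f2,
      Matrix.diagonal_mul_diagonal, hDh]
    have hfun : (fun i => g i * lam i) = fun i => Real.sqrt (lam i) := by
      funext i
      by_cases hi : lam i = 0
      · simp [hg, hi]
      · have hpos : 0 < lam i := lt_of_le_of_ne (hln i) (Ne.symm hi)
        have hs : Real.sqrt (lam i) ≠ 0 := ne_of_gt (Real.sqrt_pos.mpr hpos)
        rw [hg]
        simp only [if_neg hi]
        rw [inv_mul_eq_div, div_eq_iff hs]
        exact (Real.mul_self_sqrt (hln i)).symm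
    rw [hfun]
  have c2 : W * Dh = A * Q := by
    rw [hW, Matrix.mul_assoc, Matrix.diagonal_mul_diagonal]
    have : (fun i => g i * Real.sqrt (lam i)) = k := by
      funext i
      by_cases hi : lam i = 0
      · simp [hg, hk, hi]
      · have hpos : 0 < lam i := lt_of_le_of_ne (hln i) (Ne.symm hi)
        have hs : Real.sqrt (lam i) ≠ 0 := ne_of_gt (Real.sqrt_pos.mpr hpos)
        simp [hg, hk, hi, inv_mul_cancel₀ hs]
    rw [this, f3]
  have c3 : Aᵀ = Q * (Dh * Wᵀ) := by
    have hA : A = W * Dh * Qᵀ := by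
      rw [c2, Matrix.mul_assoc, hQ2]
      exact (Matrix.mul_one A).symm
    calc Aᵀ = (W * Dh * Qᵀ)ᵀ := by rw [← hA]
      _ = Q * ((W * Dh)ᵀ) := by rw [Matrix.transpose_mul (W * Dh) Qᵀ, Matrix.transpose_transpose]
      _ = Q * (Dh * Wᵀ) := by rw [Matrix.transpose_mul W Dh, hDh, Matrix.diagonal_transpose]
  have main : (Q * Wᵀ) * A * (Q * Wᵀ) = Aᵀ := by
    have c1' : Wᵀ * (A * (Q * Wᵀ)) = Dh * Wᵀ := by
      rw [← Matrix.mul_assoc Wᵀ A (Q * Wᵀ), ← Matrix.mul_assoc (Wᵀ * A) Q Wᵀ,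
        Matrix.mul_assoc Wᵀ A Q, c1]
    calc (Q * Wᵀ) * A * (Q * Wᵀ) = Q * (Wᵀ * (A * (Q * Wᵀ))) := by
          simp only [Matrix.mul_assoc]
      _ = Q * (Dh * Wᵀ) := by rw [c1']
      _ = Aᵀ := c3.symm
  have hQn : ‖Q‖ ≤ 1 := by
    refine sn_norm_le_one_of_diag Q (fun _ => 1) (fun _ => le_refl 1) ?_
    rw [hQ1, Matrix.diagonal_one]
  have hWn : ‖W‖ ≤ 1 := by
    refine sn_norm_le_one_of_diag W (fun i => g i * lam i * g i) ?_ ?_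
    · intro i
      by_cases hi : lam i = 0
      · simp [hg, hi]
      · have hpos : 0 < lam i := lt_of_le_of_ne (hln i) (Ne.symm hi)
        have hs : Real.sqrt (lam i) ≠ 0 := ne_of_gt (Real.sqrt_pos.mpr hpos)
        rw [hg]
        simp only [if_neg hi]
        rw [show (Real.sqrt (lam i))⁻¹ * lam i * (Real.sqrt (lam i))⁻¹
            = lam i / (Real.sqrt (lam i) * Real.sqrt (lam i)) from by ring,
          Real.mul_self_sqrt (hln i), div_self hi]
    · rw [hW, Matrix.transpose_mul, Matrix.diagonal_transpose, Matrix.mul_assoc,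
        ← Matrix.mul_assoc (A * Q)ᵀ, f2, Matrix.diagonal_mul_diagonal, Matrix.diagonal_mul_diagonal]
      apply congrArg Matrix.diagonal; funext i; ring
  have hXn : ‖Q * Wᵀ‖ ≤ 1 := by
    calc ‖Q * Wᵀ‖ ≤ ‖Q‖ * ‖Wᵀ‖ := Matrix.l2_opNorm_mul Q Wᵀ
      _ ≤ 1 := by
          rw [sn_normT]
          exact mul_le_one₀ hQn (norm_nonneg _) hWn
  exact ⟨Q * Wᵀ, Q * Wᵀ, hXn, hXn, main⟩


set_option maxHeartbeats 1000000 in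
lemma key_identity {d r : ℕ} (Vs VU U : Matrix (Fin d) (Fin r) ℝ) (Xs M : Matrix (Fin d) (Fin d) ℝ)
    (μ : ℝ) (hVsX : Vs * Vsᵀ * Xs = Xs) (hVUU : VU * VUᵀ * U = U)
    (hM : Mᵀ = M) (hXsym : Xsᵀ = Xs) :
    Vsᵀ * ((U + μ • (M * U)) * (U + μ • (M * U))ᵀ - Xs)
      = (-1 : ℝ) • (((1 : Matrix (Fin r) (Fin r) ℝ) - μ • (Vsᵀ * Xs * Vs)) * (Vsᵀ * (Xs - U * Uᵀ)) * ((1 : Matrix (Fin d) (Fin d) ℝ) - μ • (U * Uᵀ)))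
      + (μ ^ 2) • ((Vsᵀ * Xs * Vs) * (Vsᵀ * (Xs - U * Uᵀ)) * (U * Uᵀ))
      + (-μ) • ((1 : Matrix (Fin r) (Fin r) ℝ) * (Vsᵀ * (Xs - U * Uᵀ)) * (Xs - U * Uᵀ))
      + μ • (Vsᵀ * ((M - (Xs - U * Uᵀ)) * VU) * (VUᵀ * (U * Uᵀ)))
      + μ • ((Vsᵀ * (U * Uᵀ) * VU) * ((M - (Xs - U * Uᵀ)) * VU)ᵀ * (1 : Matrix (Fin d) (Fin d) ℝ))
      + (μ ^ 2) • ((1 : Matrix (Fin r) (Fin r) ℝ) * (Vsᵀ * (Xs - U * Uᵀ)) * ((U * Uᵀ) * M))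
      + (μ ^ 2) • (Vsᵀ * ((M - (Xs - U * Uᵀ)) * VU) * (VUᵀ * ((U * Uᵀ) * M))) := by
  have hBc : ∀ {p : ℕ} (X : Matrix (Fin d) (Fin p) ℝ), Vs * (Vsᵀ * (Xs * X)) = Xs * X := by
    intro p X
    rw [← Matrix.mul_assoc, ← Matrix.mul_assoc, hVsX]
  have hBc0 : Vs * (Vsᵀ * Xs) = Xs := by rw [← Matrix.mul_assoc, hVsX]
  have hXsV : Xs * (Vs * Vsᵀ) = Xs := by
    have h2 := congrArg Matrix.transpose hVsX
    simp only [Matrix.transpose_mul, Matrix.transpose_transpose, hXsym] at h2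
    rw [← Matrix.mul_assoc] at h2
    rw [← Matrix.mul_assoc]
    exact h2
  have hXc : ∀ {p : ℕ} (X : Matrix (Fin d) (Fin p) ℝ), Xs * (Vs * (Vsᵀ * X)) = Xs * X := by
    intro p X
    calc Xs * (Vs * (Vsᵀ * X)) = (Xs * (Vs * Vsᵀ)) * X := by simp only [Matrix.mul_assoc]
      _ = Xs * X := by rw [hXsV]
  have hPc : ∀ {p : ℕ} (X : Matrix (Fin r) (Fin p) ℝ), VU * (VUᵀ * (U * X)) = U * X := by
    intro p X
    rw [← Matrix.mul_assoc, ← Matrix.mul_assoc, hVUU]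
  have hPc0 : VU * (VUᵀ * U) = U := by rw [← Matrix.mul_assoc, hVUU]
  have h : Uᵀ * (VU * VUᵀ) = Uᵀ := by
    have h2 := congrArg Matrix.transpose hVUU
    simpa [Matrix.transpose_mul, Matrix.mul_assoc] using h2
  have hUt : ∀ {p : ℕ} (X : Matrix (Fin d) (Fin p) ℝ), Uᵀ * (VU * (VUᵀ * X)) = Uᵀ * X := by
    intro p X
    calc Uᵀ * (VU * (VUᵀ * X)) = (Uᵀ * (VU * VUᵀ)) * X := by simp only [Matrix.mul_assoc]
      _ = Uᵀ * X := by rw [h]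
  simp only [Matrix.transpose_add, Matrix.transpose_smul, Matrix.transpose_mul, hM, hXsym,
    Matrix.transpose_sub, Matrix.transpose_transpose, Matrix.transpose_one]
  simp only [Matrix.mul_add, Matrix.add_mul, Matrix.mul_sub, Matrix.sub_mul, Matrix.mul_one,
    Matrix.one_mul, Matrix.smul_mul, Matrix.mul_smul, smul_sub, smul_add, smul_smul,
    Matrix.mul_assoc, hBc, hBc0, hXc, hXsV, hPc, hPc0, hUt, h]
  module

end StatementTenHelpers

set_option maxHeartbeats 3200000 in
theorem statement10 {d r m : ℕ} (hrd : r ≤ d)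
    (Xs : Matrix (Fin d) (Fin d) ℝ) (hXpsd : Xs.PosSemidef) (hXrank : Xs.rank = r)
    (Vs : Matrix (Fin d) (Fin r) ℝ) (Vp : Matrix (Fin d) (Fin (d - r)) ℝ)
    (hVs : Vsᵀ * Vs = 1) (hVsX : Vs * Vsᵀ * Xs = Xs)
    (hVp : Vpᵀ * Vp = 1) (hVsVp : Vsᵀ * Vp = 0)
    (U VU : Matrix (Fin d) (Fin r) ℝ)
    (hVU : VUᵀ * VU = 1) (hVUU : VU * VUᵀ * U = U)
    (𝒜 : Matrix (Fin d) (Fin d) ℝ →ₗ[ℝ] (Fin m → ℝ))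
    (𝒜s : (Fin m → ℝ) →ₗ[ℝ] Matrix (Fin d) (Fin d) ℝ)
    (hsym : ∀ y, (𝒜s y).IsSymm)
    (hadj : ∀ (y : Fin m → ℝ) (Z : Matrix (Fin d) (Fin d) ℝ), Z.IsSymm →
      tinner (𝒜s y) Z = ∑ i, y i * 𝒜 Z i)
    (μ : ℝ) (hμ0 : 0 < μ)
    (hμ : μ ≤ 1 / (1024 * (specNorm Xs / sigmaMin Xs) * specNorm Xs))
    (hangle : specNorm (Vpᵀ * VU) ≤ 1 / 2)
    (hUb : specNorm U ≤ Real.sqrt (2 * specNorm Xs))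
    (hclose : specNorm (Xs - U * Uᵀ) ≤ sigmaMin Xs / 48)
    (hE : specNorm (𝒜s (𝒜 (Xs - U * Uᵀ)) - (Xs - U * Uᵀ)) ≤ sigmaMin Xs / 48)
    (N : ∀ m' n : ℕ, Matrix (Fin m') (Fin n) ℝ → ℝ)
    (hN0 : ∀ m' n (X : Matrix (Fin m') (Fin n) ℝ), 0 ≤ N m' n X)
    (hNadd : ∀ m' n (X Y : Matrix (Fin m') (Fin n) ℝ), N m' n (X + Y) ≤ N m' n X + N m' n Y)
    (hNsmul : ∀ m' n (c : ℝ) (X : Matrix (Fin m') (Fin n) ℝ), N m' n (c • X) = |c| * N m' n X)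
    (hNmul : ∀ m' n p q (X : Matrix (Fin m') (Fin n) ℝ) (Y : Matrix (Fin n) (Fin p) ℝ)
        (Z : Matrix (Fin p) (Fin q) ℝ),
      N m' q (X * Y * Z) ≤ specNorm X * N n p Y * specNorm Z) :
    N r d (Vsᵀ * ((U + μ • (𝒜s (𝒜 (Xs - U * Uᵀ)) * U))
          * (U + μ • (𝒜s (𝒜 (Xs - U * Uᵀ)) * U))ᵀ - Xs))
      ≤ (1 - μ / 8 * sigmaMin Xs) * N r d (Vsᵀ * (Xs - U * Uᵀ))
        + 5 * μ * specNorm Xs * N d r ((𝒜s (𝒜 (Xs - U * Uᵀ)) - (Xs - U * Uᵀ)) * VU) := by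
  classical
  have hsn : ∀ (p q : ℕ) (A : Matrix (Fin p) (Fin q) ℝ), specNorm A = ‖A‖ := fun _ _ _ => rfl
  simp only [hsn] at hμ hangle hUb hclose hE hNmul ⊢
  set M : Matrix (Fin d) (Fin d) ℝ := 𝒜s (𝒜 (Xs - U * Uᵀ)) with hMdef
  set σ : ℝ := sigmaMin Xs with hσdef
  set L : ℝ := ‖Xs‖ with hLdef
  have hXh : Xs.IsHermitian := hXpsd.1
  have hXsym : Xsᵀ = Xs := by
    rw [← conjTranspose_eq_transpose_of_trivial]; exact hXh
  have hMsym : Mᵀ = M := hsym (𝒜 (Xs - U * Uᵀ))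
  have hL0 : (0:ℝ) ≤ L := norm_nonneg _
  have hσ0 : (0:ℝ) ≤ σ := Real.sInf_nonneg (fun s hs => le_of_lt hs.1)
  have hσpos : 0 < σ := by
    rcases hσ0.eq_or_lt with h | h
    · exfalso
      rw [← h] at hμ
      simp only [div_zero, mul_zero, zero_mul, one_div, _root_.inv_zero] at hμ
      linarith
    · exact h
  have hLpos : 0 < L := by
    rcases hL0.eq_or_lt with h | h
    · exfalso
      rw [← h] at hμ
      simp only [zero_div, mul_zero, zero_mul, one_div, _root_.inv_zero] at hμ
      linarith
    · exact h
  have hμ2 : μ * (1024 * L ^ 2) ≤ σ := by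
    have hden : 1024 * (L / σ) * L = 1024 * L ^ 2 / σ := by
      field_simp
    rw [hden, one_div_div] at hμ
    exact (le_div_iff₀ (by positivity)).mp hμ
  -- sigma vs eigenvalues of Xs
  have hXev0 : ∀ j, 0 ≤ hXh.eigenvalues j := fun j => hXpsd.eigenvalues_nonneg j
  have hbdd : BddBelow {s : ℝ | 0 < s ∧ ∃ i, s ^ 2 = ((show (Xsᵀ * Xs).IsHermitian by simpa using Matrix.isHermitian_conjTranspose_mul_self Xs)).eigenvalues i} :=
    ⟨0, fun s hs => le_of_lt hs.1⟩
  have hsq : ∀ j, ∃ i, ((show (Xsᵀ * Xs).IsHermitian by simpa using Matrix.isHermitian_conjTranspose_mul_self Xs)).eigenvalues i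
      = (hXh.eigenvalues j) ^ 2 := by
    intro j
    have hnz : hXh.eigenvectorBasis j ≠ 0 := by
      intro h0
      have h1 := hXh.eigenvectorBasis.orthonormal.1 j
      rw [h0] at h1; simp at h1
    apply sn_eig_mem ((show (Xsᵀ * Xs).IsHermitian by simpa using Matrix.isHermitian_conjTranspose_mul_self Xs)) (hXh.eigenvectorBasis j) hnz
    have hplain : (Xsᴴ * Xs) *ᵥ ⇑(hXh.eigenvectorBasis j)
        = (hXh.eigenvalues j ^ 2) • ⇑(hXh.eigenvectorBasis j) := by
      rw [show Xsᴴ = Xs from hXh, ← Matrix.mulVec_mulVec, hXh.mulVec_eigenvectorBasis,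
        Matrix.mulVec_smul, hXh.mulVec_eigenvectorBasis, smul_smul, sq]
    exact congrArg (EuclideanSpace.equiv (Fin d) ℝ).symm hplain
  have hmemσ : ∀ j, hXh.eigenvalues j ≠ 0 → σ ≤ hXh.eigenvalues j := by
    intro j hj
    apply csInf_le hbdd
    refine ⟨lt_of_le_of_ne (hXev0 j) (Ne.symm hj), ?_⟩
    obtain ⟨i, hi⟩ := hsq j
    exact ⟨i, hi.symm⟩
  have hσL : σ ≤ L := by
    have hne : {s : ℝ | 0 < s ∧ ∃ i, s ^ 2 = ((show (Xsᵀ * Xs).IsHermitian by simpa using Matrix.isHermitian_conjTranspose_mul_self Xs)).eigenvalues i}.Nonempty := by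
      by_contra hcon
      rw [Set.not_nonempty_iff_eq_empty] at hcon
      have : σ = 0 := by
        rw [hσdef, sigmaMin, hcon, Real.sInf_empty]
      linarith
    obtain ⟨s, hs1, i, hs2⟩ := hne
    have h1 : σ ≤ s := csInf_le hbdd ⟨hs1, i, hs2⟩
    have h2 : |((show (Xsᵀ * Xs).IsHermitian by simpa using Matrix.isHermitian_conjTranspose_mul_self Xs)).eigenvalues i| ≤ ‖Xsᴴ * Xs‖ :=
      sn_eig_abs_le ((show (Xsᵀ * Xs).IsHermitian by simpa using Matrix.isHermitian_conjTranspose_mul_self Xs))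
        (fun x => sn_inner_abs_le_norm _ x) i
    have h3 : ‖Xsᴴ * Xs‖ ≤ L * L := by
      rw [show Xsᴴ = Xs from hXh]
      exact Matrix.l2_opNorm_mul Xs Xs
    have h4 : s ^ 2 ≤ L * L := by
      calc s ^ 2 = ((show (Xsᵀ * Xs).IsHermitian by simpa using Matrix.isHermitian_conjTranspose_mul_self Xs)).eigenvalues i := hs2
        _ ≤ |((show (Xsᵀ * Xs).IsHermitian by simpa using Matrix.isHermitian_conjTranspose_mul_self Xs)).eigenvalues i| := le_abs_self _
        _ ≤ L * L := le_trans h2 h3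
    nlinarith
  -- basic norms
  have hVsn : ‖Vs‖ ≤ 1 := by
    refine sn_norm_le_one_of_diag Vs (fun _ => 1) (fun _ => le_refl 1) ?_
    rw [hVs, Matrix.diagonal_one]
  have hVstn : ‖Vsᵀ‖ ≤ 1 := by rw [sn_normT]; exact hVsn
  have hVUn : ‖VU‖ ≤ 1 := by
    refine sn_norm_le_one_of_diag VU (fun _ => 1) (fun _ => le_refl 1) ?_
    rw [hVU, Matrix.diagonal_one]
  have hVUtn : ‖VUᵀ‖ ≤ 1 := by rw [sn_normT]; exact hVUn
  have hone_r : ‖(1 : Matrix (Fin r) (Fin r) ℝ)‖ ≤ 1 := by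
    refine sn_norm_le_one_of_diag 1 (fun _ => 1) (fun _ => le_refl 1) ?_
    rw [Matrix.transpose_one, Matrix.one_mul, Matrix.diagonal_one]
  have hone_d : ‖(1 : Matrix (Fin d) (Fin d) ℝ)‖ ≤ 1 := by
    refine sn_norm_le_one_of_diag 1 (fun _ => 1) (fun _ => le_refl 1) ?_
    rw [Matrix.transpose_one, Matrix.one_mul, Matrix.diagonal_one]
  have hU2 : ‖U‖ ^ 2 ≤ 2 * L := by
    have h1 : ‖U‖ ^ 2 ≤ Real.sqrt (2 * L) ^ 2 :=
      pow_le_pow_left₀ (norm_nonneg U) hUb 2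
    rwa [Real.sq_sqrt (by positivity)] at h1
  have hSn : ‖U * Uᵀ‖ ≤ 2 * L := by
    calc ‖U * Uᵀ‖ ≤ ‖U‖ * ‖Uᵀ‖ := Matrix.l2_opNorm_mul U Uᵀ
      _ = ‖U‖ ^ 2 := by rw [sn_normT]; ring
      _ ≤ 2 * L := hU2
  have hΔn : ‖Xs - U * Uᵀ‖ ≤ σ / 48 := hclose
  have hEn : ‖M - (Xs - U * Uᵀ)‖ ≤ σ / 48 := hE
  have hMn : ‖M‖ ≤ σ / 24 := by
    calc ‖M‖ = ‖(Xs - U * Uᵀ) + (M - (Xs - U * Uᵀ))‖ := by rw [add_sub_cancel]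
      _ ≤ ‖Xs - U * Uᵀ‖ + ‖M - (Xs - U * Uᵀ)‖ := norm_add_le _ _
      _ ≤ σ / 48 + σ / 48 := add_le_add hΔn hEn
      _ = σ / 24 := by ring
  have hBn : ‖Vsᵀ * Xs * Vs‖ ≤ L := by
    calc ‖Vsᵀ * Xs * Vs‖ ≤ ‖Vsᵀ * Xs‖ * ‖Vs‖ := Matrix.l2_opNorm_mul _ _
      _ ≤ (‖Vsᵀ‖ * ‖Xs‖) * ‖Vs‖ :=
          mul_le_mul_of_nonneg_right (Matrix.l2_opNorm_mul _ _) (norm_nonneg _)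
      _ ≤ (1 * L) * 1 := by
          apply mul_le_mul _ hVsn (norm_nonneg _) (by positivity)
          exact mul_le_mul_of_nonneg_right hVstn (norm_nonneg _)
      _ = L := by ring

  -- scalar facts
  have q1 : μ ^ 2 * L ^ 2 ≤ μ * σ / 1024 := by
    nlinarith [mul_le_mul_of_nonneg_left hμ2 hμ0.le]
  have q2 : μ * L ≤ 1 / 1024 := by
    nlinarith [hμ2, hσL, hLpos, mul_pos hLpos hLpos]
  have q3 : μ * σ ≤ 1 / 1024 := by
    nlinarith [q2, mul_nonneg hμ0.le (by linarith : (0:ℝ) ≤ L - σ)]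
  have h1mμσ : (0:ℝ) ≤ 1 - μ * σ := by linarith
  -- lower bound for B quadratic form
  have hBlow : ∀ x : EuclideanSpace ℝ (Fin r),
      σ * ‖x‖ ^ 2 ≤ inner ℝ x ((EuclideanSpace.equiv (Fin r) ℝ).symm ((Vsᵀ * Xs * Vs) *ᵥ x)) := by
    have hle : LinearMap.range (Matrix.mulVecLin Xs) ≤ LinearMap.range (Matrix.mulVecLin Vs) := by
      rintro y ⟨v, rfl⟩
      refine ⟨(Vsᵀ * Xs) *ᵥ v, ?_⟩
      simp only [Matrix.mulVecLin_apply, Matrix.mulVec_mulVec]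
      rw [← Matrix.mul_assoc, hVsX]
    have hVr : Vs.rank = r := by
      refine le_antisymm ((Matrix.rank_le_card_width Vs).trans (by simp)) ?_
      have h1 : (Vsᵀ * Vs).rank ≤ Vs.rank := Matrix.rank_mul_le_right _ _
      rw [hVs, Matrix.rank_one] at h1
      simpa using h1
    have heq : LinearMap.range (Matrix.mulVecLin Xs) = LinearMap.range (Matrix.mulVecLin Vs) := by
      apply Submodule.eq_of_le_of_finrank_le hle
      have e1 : Module.finrank ℝ (LinearMap.range (Matrix.mulVecLin Vs)) = Vs.rank := rfl
      have e2 : Module.finrank ℝ (LinearMap.range (Matrix.mulVecLin Xs)) = Xs.rank := rfl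
      rw [e1, e2, hVr, hXrank]
    intro x
    obtain ⟨z, hz⟩ : ∃ z : Fin d → ℝ, Xs *ᵥ z = Vs *ᵥ ⇑x := by
      have hmem : Vs *ᵥ ⇑x ∈ LinearMap.range (Matrix.mulVecLin Vs) := ⟨⇑x, rfl⟩
      rw [← heq] at hmem
      obtain ⟨z, hz⟩ := hmem
      exact ⟨z, hz⟩
    set y : EuclideanSpace ℝ (Fin d) := (EuclideanSpace.equiv (Fin d) ℝ).symm (Vs *ᵥ x) with hydef
    have hinner : (inner ℝ x ((EuclideanSpace.equiv (Fin r) ℝ).symm ((Vsᵀ * Xs * Vs) *ᵥ x)) : ℝ)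
        = inner ℝ y ((EuclideanSpace.equiv (Fin d) ℝ).symm (Xs *ᵥ y)) := by
      have key := sn_inner_mulVec_left Vs x ((EuclideanSpace.equiv (Fin d) ℝ).symm (Xs *ᵥ y))
      calc (inner ℝ x ((EuclideanSpace.equiv (Fin r) ℝ).symm ((Vsᵀ * Xs * Vs) *ᵥ x)) : ℝ)
          = inner ℝ x ((EuclideanSpace.equiv (Fin r) ℝ).symm
              (Vsᵀ *ᵥ ((EuclideanSpace.equiv (Fin d) ℝ).symm (Xs *ᵥ y)))) := by
            congr 1
            apply congrArg
            show (Vsᵀ * Xs * Vs) *ᵥ ⇑x = Vsᵀ *ᵥ (Xs *ᵥ (Vs *ᵥ ⇑x))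
            rw [Matrix.mulVec_mulVec, Matrix.mulVec_mulVec]
        _ = inner ℝ ((EuclideanSpace.equiv (Fin d) ℝ).symm (Vs *ᵥ x))
              ((EuclideanSpace.equiv (Fin d) ℝ).symm (Xs *ᵥ y)) := key.symm
        _ = inner ℝ y ((EuclideanSpace.equiv (Fin d) ℝ).symm (Xs *ᵥ y)) := rfl
    rw [hinner]
    have hc0 : ∀ j, hXh.eigenvalues j = 0 → hXh.eigenvectorBasis.repr y j = 0 := by
      intro j hj
      have hyz : y = (EuclideanSpace.equiv (Fin d) ℝ).symm
          (Xs *ᵥ ((EuclideanSpace.equiv (Fin d) ℝ).symm z)) := by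
        rw [hydef]; exact congrArg _ hz.symm
      rw [hyz, sn_repr_sym hXh _ j, hj, zero_mul]
    have hsum : (inner ℝ y ((EuclideanSpace.equiv (Fin d) ℝ).symm (Xs *ᵥ y)) : ℝ)
        = ∑ j, hXh.eigenvalues j * hXh.eigenvectorBasis.repr y j ^ 2 := by
      rw [sn_inner_eq_sum_repr hXh]
      apply Finset.sum_congr rfl
      intro j _
      rw [sn_repr_sym hXh y j]; ring
    have hny : ‖y‖ ^ 2 = ‖x‖ ^ 2 := by
      rw [hydef, sn_norm_mulVec_sq Vs x, hVs, Matrix.one_mulVec]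
      exact real_inner_self_eq_norm_sq x
    rw [hsum, ← hny, sn_norm_sq_eq_sum_repr hXh, Finset.mul_sum]
    apply Finset.sum_le_sum
    intro j _
    by_cases hj : hXh.eigenvalues j = 0
    · rw [hj, hc0 j hj]; simp
    · nlinarith [hmemσ j hj, sq_nonneg (hXh.eigenvectorBasis.repr y j)]
  -- contraction norm for 1 - μ B
  have hBherm : (Vsᵀ * Xs * Vs).IsHermitian := by
    show (Vsᵀ * Xs * Vs)ᴴ = _
    rw [conjTranspose_eq_transpose_of_trivial, Matrix.transpose_mul, Matrix.transpose_mul,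
      Matrix.transpose_transpose, hXsym, Matrix.mul_assoc]
  have hC1 : ‖(1 : Matrix (Fin r) (Fin r) ℝ) - μ • (Vsᵀ * Xs * Vs)‖ ≤ 1 - μ * σ := by
    have hherm : ((1 : Matrix (Fin r) (Fin r) ℝ) - μ • (Vsᵀ * Xs * Vs)).IsHermitian := by
      show _ᴴ = _
      rw [Matrix.conjTranspose_sub, Matrix.conjTranspose_smul, Matrix.conjTranspose_one, hBherm]
      norm_num
    apply sn_sym_norm_le hherm h1mμσ
    intro x
    have hform : (inner ℝ x ((EuclideanSpace.equiv (Fin r) ℝ).symm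
        (((1 : Matrix (Fin r) (Fin r) ℝ) - μ • (Vsᵀ * Xs * Vs)) *ᵥ x)) : ℝ)
        = ‖x‖ ^ 2 - μ * inner ℝ x ((EuclideanSpace.equiv (Fin r) ℝ).symm ((Vsᵀ * Xs * Vs) *ᵥ x)) := by
      have h1 : ((1 : Matrix (Fin r) (Fin r) ℝ) - μ • (Vsᵀ * Xs * Vs)) *ᵥ ⇑x
          = ⇑x - μ • ((Vsᵀ * Xs * Vs) *ᵥ ⇑x) := by
        rw [Matrix.sub_mulVec, Matrix.smul_mulVec, Matrix.one_mulVec]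
      rw [show (EuclideanSpace.equiv (Fin r) ℝ).symm
            (((1 : Matrix (Fin r) (Fin r) ℝ) - μ • (Vsᵀ * Xs * Vs)) *ᵥ x)
          = x - μ • ((EuclideanSpace.equiv (Fin r) ℝ).symm ((Vsᵀ * Xs * Vs) *ᵥ x)) from
          congrArg _ h1,
        inner_sub_right, real_inner_smul_right, real_inner_self_eq_norm_sq]
    rw [hform]
    have habs := sn_inner_abs_le_norm (Vsᵀ * Xs * Vs) x
    have hup : (inner ℝ x ((EuclideanSpace.equiv (Fin r) ℝ).symm ((Vsᵀ * Xs * Vs) *ᵥ x)) : ℝ)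
        ≤ L * ‖x‖ ^ 2 := by
      have := (abs_le.mp habs).2
      nlinarith [mul_le_mul_of_nonneg_right hBn (sq_nonneg ‖x‖)]
    have hlow := hBlow x
    rw [abs_le]
    constructor
    · nlinarith [sq_nonneg ‖x‖, mul_le_mul_of_nonneg_left hup hμ0.le]
    · nlinarith [mul_le_mul_of_nonneg_left hlow hμ0.le, sq_nonneg ‖x‖]
  -- contraction norm for 1 - μ S
  have hC2 : ‖(1 : Matrix (Fin d) (Fin d) ℝ) - μ • (U * Uᵀ)‖ ≤ 1 := by
    have hherm : ((1 : Matrix (Fin d) (Fin d) ℝ) - μ • (U * Uᵀ)).IsHermitian := by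
      show _ᴴ = _
      rw [Matrix.conjTranspose_sub, Matrix.conjTranspose_smul, Matrix.conjTranspose_one]
      rw [conjTranspose_eq_transpose_of_trivial, Matrix.transpose_mul, Matrix.transpose_transpose]
      norm_num
    apply sn_sym_norm_le hherm zero_le_one
    intro x
    have hSform : (inner ℝ x ((EuclideanSpace.equiv (Fin d) ℝ).symm ((U * Uᵀ) *ᵥ x)) : ℝ)
        = ‖(EuclideanSpace.equiv (Fin r) ℝ).symm (Uᵀ *ᵥ x)‖ ^ 2 := by
      rw [sn_norm_mulVec_sq Uᵀ x, Matrix.transpose_transpose]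
    have hSup : (inner ℝ x ((EuclideanSpace.equiv (Fin d) ℝ).symm ((U * Uᵀ) *ᵥ x)) : ℝ)
        ≤ 2 * L * ‖x‖ ^ 2 := by
      rw [hSform]
      have h1 := Matrix.l2_opNorm_mulVec Uᵀ x
      have h2 : ‖Uᵀ‖ = ‖U‖ := sn_normT U
      have h3 : ‖(EuclideanSpace.equiv (Fin r) ℝ).symm (Uᵀ *ᵥ x)‖ ^ 2 ≤ (‖Uᵀ‖ * ‖x‖) ^ 2 :=
        pow_le_pow_left₀ (norm_nonneg _) h1 2
      rw [h2] at h3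
      linarith only [h3, mul_le_mul_of_nonneg_right hU2 (sq_nonneg ‖x‖)]
    have hSlow : (0:ℝ) ≤ inner ℝ x ((EuclideanSpace.equiv (Fin d) ℝ).symm ((U * Uᵀ) *ᵥ x)) := by
      rw [hSform]; positivity
    have hform : (inner ℝ x ((EuclideanSpace.equiv (Fin d) ℝ).symm
        (((1 : Matrix (Fin d) (Fin d) ℝ) - μ • (U * Uᵀ)) *ᵥ x)) : ℝ)
        = ‖x‖ ^ 2 - μ * inner ℝ x ((EuclideanSpace.equiv (Fin d) ℝ).symm ((U * Uᵀ) *ᵥ x)) := by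
      have h1 : ((1 : Matrix (Fin d) (Fin d) ℝ) - μ • (U * Uᵀ)) *ᵥ ⇑x
          = ⇑x - μ • ((U * Uᵀ) *ᵥ ⇑x) := by
        rw [Matrix.sub_mulVec, Matrix.smul_mulVec, Matrix.one_mulVec]
      rw [show (EuclideanSpace.equiv (Fin d) ℝ).symm
            (((1 : Matrix (Fin d) (Fin d) ℝ) - μ • (U * Uᵀ)) *ᵥ x)
          = x - μ • ((EuclideanSpace.equiv (Fin d) ℝ).symm ((U * Uᵀ) *ᵥ x)) from
          congrArg _ h1,
        inner_sub_right, real_inner_smul_right, real_inner_self_eq_norm_sq]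
    rw [hform, one_mul, abs_le]
    constructor
    · nlinarith [mul_le_mul_of_nonneg_left hSup hμ0.le, sq_nonneg ‖x‖]
    · nlinarith [mul_le_mul_of_nonneg_left hSlow hμ0.le]

  -- composite norm bounds
  have hn4 : ‖VUᵀ * (U * Uᵀ)‖ ≤ 2 * L := by
    calc ‖VUᵀ * (U * Uᵀ)‖ ≤ ‖VUᵀ‖ * ‖U * Uᵀ‖ := Matrix.l2_opNorm_mul _ _
      _ ≤ 1 * (2 * L) := mul_le_mul hVUtn hSn (norm_nonneg _) zero_le_one
      _ = 2 * L := one_mul _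
  have hn5 : ‖Vsᵀ * (U * Uᵀ) * VU‖ ≤ 2 * L := by
    calc ‖Vsᵀ * (U * Uᵀ) * VU‖ ≤ ‖Vsᵀ * (U * Uᵀ)‖ * ‖VU‖ := Matrix.l2_opNorm_mul _ _
      _ ≤ (1 * (2 * L)) * 1 := by
          apply mul_le_mul _ hVUn (norm_nonneg _) (by positivity)
          calc ‖Vsᵀ * (U * Uᵀ)‖ ≤ ‖Vsᵀ‖ * ‖U * Uᵀ‖ := Matrix.l2_opNorm_mul _ _
            _ ≤ 1 * (2 * L) := mul_le_mul hVstn hSn (norm_nonneg _) zero_le_one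
      _ = 2 * L := by ring
  have hn6 : ‖(U * Uᵀ) * M‖ ≤ 2 * L * (σ / 24) := by
    calc ‖(U * Uᵀ) * M‖ ≤ ‖U * Uᵀ‖ * ‖M‖ := Matrix.l2_opNorm_mul _ _
      _ ≤ 2 * L * (σ / 24) := mul_le_mul hSn hMn (norm_nonneg _) (by positivity)
  have hn7 : ‖VUᵀ * ((U * Uᵀ) * M)‖ ≤ 2 * L * (σ / 24) := by
    calc ‖VUᵀ * ((U * Uᵀ) * M)‖ ≤ ‖VUᵀ‖ * ‖(U * Uᵀ) * M‖ := Matrix.l2_opNorm_mul _ _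
      _ ≤ 1 * (2 * L * (σ / 24)) := mul_le_mul hVUtn hn6 (norm_nonneg _) zero_le_one
      _ = 2 * L * (σ / 24) := one_mul _
  -- N abbreviations
  have ha0 : 0 ≤ N r d (Vsᵀ * (Xs - U * Uᵀ)) := hN0 _ _ _
  have he0 : 0 ≤ N d r ((M - (Xs - U * Uᵀ)) * VU) := hN0 _ _ _
  set a : ℝ := N r d (Vsᵀ * (Xs - U * Uᵀ)) with hadef
  set e : ℝ := N d r ((M - (Xs - U * Uᵀ)) * VU) with hedef
  have heT : N r d (((M - (Xs - U * Uᵀ)) * VU)ᵀ) ≤ e := by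
    obtain ⟨X, Z, hX1, hZ1, hXZ⟩ := transpose_factor ((M - (Xs - U * Uᵀ)) * VU)
    calc N r d (((M - (Xs - U * Uᵀ)) * VU)ᵀ)
        = N r d (X * ((M - (Xs - U * Uᵀ)) * VU) * Z) := by rw [hXZ]
      _ ≤ ‖X‖ * e * ‖Z‖ := hNmul _ _ _ _ _ _ _
      _ ≤ 1 * e * 1 := sn_mul3_le hX1 le_rfl hZ1 he0 (norm_nonneg _) zero_le_one he0
      _ = e := by ring
  -- the key algebraic identity
  have hkey := key_identity Vs VU U Xs M μ hVsX hVUU hMsym hXsym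
  rw [hkey]
  -- per-term bounds
  have b1 : N r d (((1 : Matrix (Fin r) (Fin r) ℝ) - μ • (Vsᵀ * Xs * Vs)) * (Vsᵀ * (Xs - U * Uᵀ))
      * ((1 : Matrix (Fin d) (Fin d) ℝ) - μ • (U * Uᵀ))) ≤ (1 - μ * σ) * a := by
    calc N r d _ ≤ ‖(1 : Matrix (Fin r) (Fin r) ℝ) - μ • (Vsᵀ * Xs * Vs)‖ * a
          * ‖(1 : Matrix (Fin d) (Fin d) ℝ) - μ • (U * Uᵀ)‖ := hNmul _ _ _ _ _ _ _
      _ ≤ (1 - μ * σ) * a * 1 := sn_mul3_le hC1 le_rfl hC2 ha0 (norm_nonneg _) h1mμσ ha0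
      _ = (1 - μ * σ) * a := by ring
  have b2 : N r d ((Vsᵀ * Xs * Vs) * (Vsᵀ * (Xs - U * Uᵀ)) * (U * Uᵀ)) ≤ 2 * L ^ 2 * a := by
    calc N r d _ ≤ ‖Vsᵀ * Xs * Vs‖ * a * ‖U * Uᵀ‖ := hNmul _ _ _ _ _ _ _
      _ ≤ L * a * (2 * L) := sn_mul3_le hBn le_rfl hSn ha0 (norm_nonneg _) hL0 ha0
      _ = 2 * L ^ 2 * a := by ring
  have b3 : N r d ((1 : Matrix (Fin r) (Fin r) ℝ) * (Vsᵀ * (Xs - U * Uᵀ)) * (Xs - U * Uᵀ))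
      ≤ σ / 48 * a := by
    calc N r d _ ≤ ‖(1 : Matrix (Fin r) (Fin r) ℝ)‖ * a * ‖Xs - U * Uᵀ‖ := hNmul _ _ _ _ _ _ _
      _ ≤ 1 * a * (σ / 48) := sn_mul3_le hone_r le_rfl hΔn ha0 (norm_nonneg _) zero_le_one ha0
      _ = σ / 48 * a := by ring
  have b4 : N r d (Vsᵀ * ((M - (Xs - U * Uᵀ)) * VU) * (VUᵀ * (U * Uᵀ))) ≤ 2 * L * e := by
    calc N r d _ ≤ ‖Vsᵀ‖ * e * ‖VUᵀ * (U * Uᵀ)‖ := hNmul _ _ _ _ _ _ _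
      _ ≤ 1 * e * (2 * L) := sn_mul3_le hVstn le_rfl hn4 he0 (norm_nonneg _) zero_le_one he0
      _ = 2 * L * e := by ring
  have b5 : N r d ((Vsᵀ * (U * Uᵀ) * VU) * ((M - (Xs - U * Uᵀ)) * VU)ᵀ
      * (1 : Matrix (Fin d) (Fin d) ℝ)) ≤ 2 * L * e := by
    calc N r d _ ≤ ‖Vsᵀ * (U * Uᵀ) * VU‖ * N r d (((M - (Xs - U * Uᵀ)) * VU)ᵀ)
          * ‖(1 : Matrix (Fin d) (Fin d) ℝ)‖ := hNmul _ _ _ _ _ _ _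
      _ ≤ (2 * L) * e * 1 :=
          sn_mul3_le hn5 heT hone_d (hN0 _ _ _) (norm_nonneg _) (by positivity) he0
      _ = 2 * L * e := by ring
  have b6 : N r d ((1 : Matrix (Fin r) (Fin r) ℝ) * (Vsᵀ * (Xs - U * Uᵀ)) * ((U * Uᵀ) * M))
      ≤ L * σ / 12 * a := by
    calc N r d _ ≤ ‖(1 : Matrix (Fin r) (Fin r) ℝ)‖ * a * ‖(U * Uᵀ) * M‖ := hNmul _ _ _ _ _ _ _
      _ ≤ 1 * a * (2 * L * (σ / 24)) := sn_mul3_le hone_r le_rfl hn6 ha0 (norm_nonneg _) zero_le_one ha0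
      _ = L * σ / 12 * a := by ring
  have b7 : N r d (Vsᵀ * ((M - (Xs - U * Uᵀ)) * VU) * (VUᵀ * ((U * Uᵀ) * M)))
      ≤ L * σ / 12 * e := by
    calc N r d _ ≤ ‖Vsᵀ‖ * e * ‖VUᵀ * ((U * Uᵀ) * M)‖ := hNmul _ _ _ _ _ _ _
      _ ≤ 1 * e * (2 * L * (σ / 24)) := sn_mul3_le hVstn le_rfl hn7 he0 (norm_nonneg _) zero_le_one he0
      _ = L * σ / 12 * e := by ring
  -- scaled bounds
  have habsμ : |μ| = μ := abs_of_pos hμ0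
  have habsμ2 : |μ ^ 2| = μ ^ 2 := abs_of_nonneg (sq_nonneg μ)
  have s1 : N r d ((-1 : ℝ) • (((1 : Matrix (Fin r) (Fin r) ℝ) - μ • (Vsᵀ * Xs * Vs))
      * (Vsᵀ * (Xs - U * Uᵀ)) * ((1 : Matrix (Fin d) (Fin d) ℝ) - μ • (U * Uᵀ))))
      ≤ (1 - μ * σ) * a := by
    rw [hNsmul, abs_neg, abs_one, one_mul]; exact b1
  have s2 : N r d ((μ ^ 2) • ((Vsᵀ * Xs * Vs) * (Vsᵀ * (Xs - U * Uᵀ)) * (U * Uᵀ)))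
      ≤ μ ^ 2 * (2 * L ^ 2 * a) := by
    rw [hNsmul, habsμ2]; exact mul_le_mul_of_nonneg_left b2 (sq_nonneg μ)
  have s3 : N r d ((-μ) • ((1 : Matrix (Fin r) (Fin r) ℝ) * (Vsᵀ * (Xs - U * Uᵀ)) * (Xs - U * Uᵀ)))
      ≤ μ * (σ / 48 * a) := by
    rw [hNsmul, abs_neg, habsμ]; exact mul_le_mul_of_nonneg_left b3 hμ0.le
  have s4 : N r d (μ • (Vsᵀ * ((M - (Xs - U * Uᵀ)) * VU) * (VUᵀ * (U * Uᵀ))))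
      ≤ μ * (2 * L * e) := by
    rw [hNsmul, habsμ]; exact mul_le_mul_of_nonneg_left b4 hμ0.le
  have s5 : N r d (μ • ((Vsᵀ * (U * Uᵀ) * VU) * ((M - (Xs - U * Uᵀ)) * VU)ᵀ
      * (1 : Matrix (Fin d) (Fin d) ℝ))) ≤ μ * (2 * L * e) := by
    rw [hNsmul, habsμ]; exact mul_le_mul_of_nonneg_left b5 hμ0.le
  have s6 : N r d ((μ ^ 2) • ((1 : Matrix (Fin r) (Fin r) ℝ) * (Vsᵀ * (Xs - U * Uᵀ)) * ((U * Uᵀ) * M)))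
      ≤ μ ^ 2 * (L * σ / 12 * a) := by
    rw [hNsmul, habsμ2]; exact mul_le_mul_of_nonneg_left b6 (sq_nonneg μ)
  have s7 : N r d ((μ ^ 2) • (Vsᵀ * ((M - (Xs - U * Uᵀ)) * VU) * (VUᵀ * ((U * Uᵀ) * M))))
      ≤ μ ^ 2 * (L * σ / 12 * e) := by
    rw [hNsmul, habsμ2]; exact mul_le_mul_of_nonneg_left b7 (sq_nonneg μ)
  have step : ∀ (X Y : Matrix (Fin r) (Fin d) ℝ) (bx bY : ℝ), N r d X ≤ bx → N r d Y ≤ bY →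
      N r d (X + Y) ≤ bx + bY := fun X Y bx bY h1 h2 => le_trans (hNadd _ _ _ _) (add_le_add h1 h2)
  refine le_trans (step _ _ _ _ (step _ _ _ _ (step _ _ _ _ (step _ _ _ _ (step _ _ _ _
    (step _ _ _ _ s1 s2) s3) s4) s5) s6) s7) ?_
  -- final arithmetic
  have k1 : μ ^ 2 * L ^ 2 * a ≤ μ * σ / 1024 * a := mul_le_mul_of_nonneg_right q1 ha0
  have k2 : μ * L * (μ * σ * a) ≤ 1 / 1024 * (μ * σ * a) :=
    mul_le_mul_of_nonneg_right q2 (mul_nonneg (mul_nonneg hμ0.le hσ0) ha0)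
  have k3 : μ * σ * (μ * L * e) ≤ 1 / 1024 * (μ * L * e) :=
    mul_le_mul_of_nonneg_right q3 (mul_nonneg (mul_nonneg hμ0.le hL0) he0)
  have n1 : 0 ≤ μ * σ * a := mul_nonneg (mul_nonneg hμ0.le hσ0) ha0
  have n2 : 0 ≤ μ * L * e := mul_nonneg (mul_nonneg hμ0.le hL0) he0
  linarith only [k1, k2, k3, n1, n2, ha0, he0]
end

section
/- The set D_r = {X ∈ S^d : ‖X‖_F = 1, rank(X) ≤ r} of unit-Frobenius-norm symmetric matrices of rank at most r admits, for every ε > 0, an ε-net (in Frobenius distance) of cardinality at most (1 + 6/ε)^{(2d+1)r}. -/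
open scoped BigOperators
open Matrix

/-! ### Auxiliary material -/

section Aux
open MeasureTheory Metric
open scoped ENNReal NNReal

private lemma packing_bound (n : ℕ) (hn : 0 < n) {δ : ℝ} (hδ : 0 < δ)
    (T : Finset (EuclideanSpace ℝ (Fin n)))
    (hT1 : ∀ t ∈ T, ‖t‖ = 1)
    (hsep : ∀ s ∈ T, ∀ t ∈ T, s ≠ t → δ < dist s t) :
    (T.card : ℝ) ≤ (1 + 2/δ) ^ n := by
  classical
  haveI : Nontrivial (EuclideanSpace ℝ (Fin n)) := by
    apply Module.nontrivial_of_finrank_pos (R := ℝ)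
    simpa [finrank_euclideanSpace] using hn
  set μ : Measure (EuclideanSpace ℝ (Fin n)) := volume with hμ
  have hB0 : μ (ball 0 1) ≠ 0 := (measure_ball_pos μ _ one_pos).ne'
  have hBt : μ (ball 0 1) ≠ ⊤ := measure_ball_lt_top.ne
  have hdisj : (T : Set (EuclideanSpace ℝ (Fin n))).PairwiseDisjoint
      (fun t => ball t (δ/2)) := by
    intro s hs t ht hst
    exact ball_disjoint_ball (by
      have := hsep s hs t ht hst; linarith)
  have hsum : ∑ t ∈ T, μ (ball t (δ/2)) = μ (⋃ t ∈ T, ball t (δ/2)) :=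
    (measure_biUnion_finset hdisj fun t _ => measurableSet_ball).symm
  have hsub : (⋃ t ∈ T, ball t (δ/2)) ⊆ ball 0 (1 + δ/2) := by
    intro x hx
    simp only [Set.mem_iUnion] at hx
    obtain ⟨t, ht, hxt⟩ := hx
    have : dist x t < δ/2 := mem_ball.mp hxt
    have h1 : dist x 0 ≤ dist x t + dist t 0 := dist_triangle _ _ _
    have : dist t 0 = 1 := by simpa [dist_eq_norm] using hT1 t ht
    exact mem_ball.mpr (by linarith)
  have hball : ∀ t : EuclideanSpace ℝ (Fin n),
      μ (ball t (δ/2)) = ENNReal.ofReal ((δ/2)^n) * μ (ball 0 1) := by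
    intro t
    rw [Measure.addHaar_ball μ t (by linarith : (0:ℝ) ≤ δ/2), finrank_euclideanSpace,
      Fintype.card_fin]
  have hballR : μ (ball (0 : EuclideanSpace ℝ (Fin n)) (1 + δ/2))
      = ENNReal.ofReal ((1+δ/2)^n) * μ (ball 0 1) := by
    rw [Measure.addHaar_ball μ _ (by linarith : (0:ℝ) ≤ 1 + δ/2), finrank_euclideanSpace,
      Fintype.card_fin]
  have key : (T.card : ℝ≥0∞) * (ENNReal.ofReal ((δ/2)^n)) * μ (ball 0 1)
      ≤ ENNReal.ofReal ((1+δ/2)^n) * μ (ball 0 1) := by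
    calc (T.card : ℝ≥0∞) * (ENNReal.ofReal ((δ/2)^n)) * μ (ball 0 1)
        = ∑ t ∈ T, μ (ball t (δ/2)) := by
          simp [hball, Finset.sum_const, mul_assoc]
      _ = μ (⋃ t ∈ T, ball t (δ/2)) := hsum
      _ ≤ μ (ball 0 (1 + δ/2)) := measure_mono hsub
      _ = _ := hballR
  have key2 : (T.card : ℝ≥0∞) * (ENNReal.ofReal ((δ/2)^n))
      ≤ ENNReal.ofReal ((1+δ/2)^n) := by
    exact (ENNReal.mul_le_mul_iff_left hB0 hBt).mp key
  have key3 : (T.card : ℝ) * (δ/2)^n ≤ (1+δ/2)^n := by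
    have hpow : (0:ℝ) ≤ (δ/2)^n := by positivity
    have := key2
    rw [← ENNReal.ofReal_natCast, ← ENNReal.ofReal_mul (by positivity)] at this
    exact (ENNReal.ofReal_le_ofReal_iff (by positivity)).mp this
  have hpow : (0:ℝ) < (δ/2)^n := by positivity
  have : (T.card : ℝ) ≤ (1+δ/2)^n / (δ/2)^n := (le_div_iff₀ hpow).mpr key3
  calc (T.card : ℝ) ≤ (1+δ/2)^n / (δ/2)^n := this
    _ = (1 + 2/δ)^n := by
        rw [← div_pow]; congr 1; field_simp; ring

private lemma sphere_net (n : ℕ) {δ : ℝ} (hδ : 0 < δ) :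
    ∃ T : Finset (EuclideanSpace ℝ (Fin n)), (∀ t ∈ T, ‖t‖ = 1) ∧
      (T.card : ℝ) ≤ (1 + 2/δ)^n ∧
      ∀ x : EuclideanSpace ℝ (Fin n), ‖x‖ = 1 → ∃ t ∈ T, ‖x - t‖ ≤ δ := by
  classical
  rcases Nat.eq_zero_or_pos n with hn | hn
  · refine ⟨∅, by simp, by simp; positivity, ?_⟩
    intro x hx
    subst hn
    have : x = 0 := Subsingleton.elim _ _
    rw [this, norm_zero] at hx; norm_num at hx
  · set S : Set ℕ := {k | ∃ T : Finset (EuclideanSpace ℝ (Fin n)),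
      (∀ t ∈ T, ‖t‖ = 1) ∧ (∀ s ∈ T, ∀ t ∈ T, s ≠ t → δ < dist s t) ∧ T.card = k} with hS
    have h0 : 0 ∈ S := ⟨∅, by simp, by simp, rfl⟩
    have hbdd : BddAbove S := by
      refine ⟨Nat.ceil ((1 + 2/δ)^n), ?_⟩
      rintro k ⟨T, hT1, hsep, rfl⟩
      have := packing_bound n hn hδ T hT1 hsep
      exact_mod_cast this.trans (Nat.le_ceil _)
    obtain ⟨T, hT1, hsep, hTcard⟩ := Nat.sSup_mem ⟨0, h0⟩ hbdd
    refine ⟨T, hT1, ?_, ?_⟩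
    · exact packing_bound n hn hδ T hT1 hsep
    · intro x hx
      by_contra hcon
      push_neg at hcon
      have hxT : x ∉ T := fun hmem => by
        have := hcon x hmem; simp at this; linarith
      have hins : (insert x T).card = sSup S + 1 := by
        rw [Finset.card_insert_of_notMem hxT, hTcard]
      have hmem : sSup S + 1 ∈ S := by
        refine ⟨insert x T, ?_, ?_, hins⟩
        · intro t ht
          rcases Finset.mem_insert.mp ht with h | h
          · subst h; exact hx
          · exact hT1 t h
        · intro s hs t ht hst
          rcases Finset.mem_insert.mp hs with h1 | h1 <;>
            rcases Finset.mem_insert.mp ht with h2 | h2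
          · exact absurd (h1.trans h2.symm) hst
          · subst h1; rw [dist_eq_norm]; exact hcon t h2
          · subst h2; rw [dist_comm, dist_eq_norm]; exact hcon s h1
          · exact hsep s h1 t h2 hst
      have := le_csSup hbdd hmem
      omega

private lemma frame_net (d r : ℕ) {δ : ℝ} (hδ : 0 < δ) :
    ∃ G : Finset (Fin r → EuclideanSpace ℝ (Fin d)),
      (∀ g ∈ G, Orthonormal ℝ g) ∧
      (G.card : ℝ) ≤ (1 + 4/δ)^(d*r) ∧
      ∀ u : Fin r → EuclideanSpace ℝ (Fin d), Orthonormal ℝ u →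
        ∃ g ∈ G, ∀ i, ‖u i - g i‖ ≤ δ := by
  classical
  obtain ⟨T, hT1, hTcard, hTnet⟩ := sphere_net d (half_pos hδ)
  have hTcard' : (T.card : ℝ) ≤ (1 + 4/δ)^d := by
    convert hTcard using 3
    rw [div_div_eq_mul_div]; norm_num
  set C : Finset (Fin r → EuclideanSpace ℝ (Fin d)) := Fintype.piFinset (fun _ => T) with hC
  set P : (Fin r → EuclideanSpace ℝ (Fin d)) → Prop :=
    fun t => ∃ u : Fin r → EuclideanSpace ℝ (Fin d),
      Orthonormal ℝ u ∧ ∀ i, ‖u i - t i‖ ≤ δ/2 with hP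
  set pick : (Fin r → EuclideanSpace ℝ (Fin d)) → (Fin r → EuclideanSpace ℝ (Fin d)) :=
    fun t => if h : P t then h.choose else t with hpick
  refine ⟨(C.filter P).image pick, ?_, ?_, ?_⟩
  · intro g hg
    obtain ⟨t, ht, rfl⟩ := Finset.mem_image.mp hg
    have hPt : P t := (Finset.mem_filter.mp ht).2
    rw [hpick]; simp only [dif_pos hPt]
    exact hPt.choose_spec.1
  · have h1 : ((C.filter P).image pick).card ≤ T.card ^ r := by
      calc ((C.filter P).image pick).card ≤ ((C.filter P)).card := Finset.card_image_le
        _ ≤ C.card := Finset.card_filter_le _ _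
        _ = T.card ^ r := by rw [hC, Fintype.card_piFinset]; simp
    calc (((C.filter P).image pick).card : ℝ) ≤ (T.card : ℝ) ^ r := by exact_mod_cast h1
      _ ≤ ((1 + 4/δ)^d) ^ r := pow_le_pow_left₀ (by positivity) hTcard' r
      _ = (1 + 4/δ)^(d*r) := by rw [← pow_mul]
  · intro u hu
    have hx : ∀ i, ∃ t ∈ T, ‖u i - t‖ ≤ δ/2 := fun i => hTnet (u i) (hu.1 i)
    choose t htT htclose using hx
    have htC : t ∈ C := by rw [hC]; exact Fintype.mem_piFinset.mpr htT
    have hPt : P t := ⟨u, hu, htclose⟩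
    refine ⟨pick t, Finset.mem_image_of_mem _ (Finset.mem_filter.mpr ⟨htC, hPt⟩), ?_⟩
    intro i
    have hspec := hPt.choose_spec
    have : pick t = hPt.choose := by rw [hpick]; simp only [dif_pos hPt]
    rw [this]
    calc ‖u i - hPt.choose i‖ ≤ ‖u i - t i‖ + ‖t i - hPt.choose i‖ := by
          have := norm_sub_le_norm_sub_add_norm_sub (u i) (t i) (hPt.choose i)
          exact this
      _ ≤ δ/2 + δ/2 := add_le_add (htclose i) (by rw [norm_sub_rev]; exact hspec.2 i)
      _ = δ := by ring

/-! Frobenius inner product machinery -/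

private def mdot {d : ℕ} (a b : Fin d → ℝ) : ℝ := ∑ p, a p * b p

private lemma mdot_comm {d : ℕ} (a b : Fin d → ℝ) : mdot a b = mdot b a := by
  unfold mdot; exact Finset.sum_congr rfl fun p _ => mul_comm _ _

private def FI {d : ℕ} (A B : Matrix (Fin d) (Fin d) ℝ) : ℝ := ∑ p, ∑ q, A p q * B p q

private lemma FI_comm {d : ℕ} (A B : Matrix (Fin d) (Fin d) ℝ) : FI A B = FI B A := by
  unfold FI
  exact Finset.sum_congr rfl fun p _ => Finset.sum_congr rfl fun q _ => mul_comm _ _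

private lemma FI_add_left {d : ℕ} (A B C : Matrix (Fin d) (Fin d) ℝ) :
    FI (A + B) C = FI A C + FI B C := by
  unfold FI
  simp [Matrix.add_apply, add_mul, Finset.sum_add_distrib]

private lemma FI_smul_left {d : ℕ} (c : ℝ) (A B : Matrix (Fin d) (Fin d) ℝ) :
    FI (c • A) B = c * FI A B := by
  unfold FI
  simp [Matrix.smul_apply, Finset.mul_sum, mul_assoc]

private lemma FI_sum_left {d m : ℕ} (M : Fin m → Matrix (Fin d) (Fin d) ℝ)
    (B : Matrix (Fin d) (Fin d) ℝ) :
    FI (∑ i, M i) B = ∑ i, FI (M i) B := by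
  classical
  induction (Finset.univ : Finset (Fin m)) using Finset.induction with
  | empty => simp [FI]
  | insert _ _ h ih => rw [Finset.sum_insert h, Finset.sum_insert h, FI_add_left, ih]

private lemma FI_rank_one {d : ℕ} (a b a' b' : Fin d → ℝ) :
    FI (vecMulVec a b) (vecMulVec a' b') = mdot a a' * mdot b b' := by
  unfold FI mdot
  rw [Finset.sum_mul_sum]
  refine Finset.sum_congr rfl fun p _ => Finset.sum_congr rfl fun q _ => ?_
  simp [vecMulVec_apply]; ring

private lemma FI_expand {d m : ℕ} (c : Fin m → ℝ) (a b : Fin m → Fin d → ℝ)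
    (c' : Fin m → ℝ) (a' b' : Fin m → Fin d → ℝ) :
    FI (∑ i, c i • vecMulVec (a i) (b i)) (∑ j, c' j • vecMulVec (a' j) (b' j))
      = ∑ i, ∑ j, c i * c' j * mdot (a i) (a' j) * mdot (b i) (b' j) := by
  rw [FI_sum_left]
  refine Finset.sum_congr rfl fun i _ => ?_
  rw [FI_comm, FI_sum_left]
  refine Finset.sum_congr rfl fun j _ => ?_
  rw [FI_comm, FI_smul_left, FI_comm, FI_smul_left, FI_rank_one,
    mdot_comm (a' j) (a i), mdot_comm (b' j) (b i)]
  ring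

private lemma frobNorm_eq_sqrt_FI {d : ℕ} (A : Matrix (Fin d) (Fin d) ℝ) :
    frobNorm A = Real.sqrt (FI A A) := by
  unfold frobNorm FI
  congr 1
  refine Finset.sum_congr rfl fun p _ => Finset.sum_congr rfl fun q _ => ?_
  ring

private noncomputable def emb {d : ℕ} (A : Matrix (Fin d) (Fin d) ℝ) :
    EuclideanSpace ℝ (Fin d × Fin d) :=
  (WithLp.equiv 2 (Fin d × Fin d → ℝ)).symm (fun pq => A pq.1 pq.2)

private lemma frob_eq_norm_emb {d : ℕ} (A : Matrix (Fin d) (Fin d) ℝ) :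
    frobNorm A = ‖emb A‖ := by
  rw [EuclideanSpace.norm_eq]
  unfold frobNorm
  congr 1
  rw [Fintype.sum_prod_type]
  refine Finset.sum_congr rfl fun p _ => Finset.sum_congr rfl fun q _ => ?_
  simp [emb, sq_abs]

private lemma emb_add {d : ℕ} (A B : Matrix (Fin d) (Fin d) ℝ) :
    emb (A + B) = emb A + emb B := rfl

private lemma frob_triangle3 {d : ℕ} (A B C : Matrix (Fin d) (Fin d) ℝ) :
    frobNorm (A + B + C) ≤ frobNorm A + frobNorm B + frobNorm C := by
  rw [frob_eq_norm_emb, frob_eq_norm_emb, frob_eq_norm_emb, frob_eq_norm_emb,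
    emb_add, emb_add]
  exact norm_add₃_le

private lemma double_sum_diag {m : ℕ} (f : Fin m → Fin m → ℝ)
    (h : ∀ i j, i ≠ j → f i j = 0) :
    ∑ i, ∑ j, f i j = ∑ i, f i i := by
  refine Finset.sum_congr rfl fun i _ => ?_
  refine Finset.sum_eq_single i (fun j _ hj => h i j (Ne.symm hj)) ?_
  simp

/-! Coordinate helpers -/

private lemma sum_sq_coords {n : ℕ} (x : EuclideanSpace ℝ (Fin n)) :
    ∑ i, (x i)^2 = ‖x‖^2 := by
  rw [EuclideanSpace.norm_eq, Real.sq_sqrt (by positivity)]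
  exact Finset.sum_congr rfl fun i _ => (sq_abs _).symm

private lemma sum_sq_sub_coords {n : ℕ} (x y : EuclideanSpace ℝ (Fin n)) :
    ∑ i, (x i - y i)^2 = ‖x - y‖^2 := by
  rw [← sum_sq_coords (x - y)]
  exact Finset.sum_congr rfl fun i _ => by simp [PiLp.sub_apply]

private lemma orthonormal_mdot {n m : ℕ} {u : Fin m → EuclideanSpace ℝ (Fin n)}
    (hu : Orthonormal ℝ u) (i j : Fin m) :
    mdot (⇑(u i)) (⇑(u j)) = if i = j then (1:ℝ) else 0 := by
  have h := orthonormal_iff_ite.mp hu i j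
  rw [PiLp.inner_apply] at h
  simpa [mdot, mul_comm] using h

private lemma mdot_sub_self {n : ℕ} (x y : EuclideanSpace ℝ (Fin n)) :
    mdot (⇑x - ⇑y) (⇑x - ⇑y) = ‖x - y‖^2 := by
  rw [← sum_sq_sub_coords x y]
  unfold mdot
  exact Finset.sum_congr rfl fun p _ => by simp [Pi.sub_apply]; ring

/-! Rank lemmas -/

private lemma rank_add_le' {d : ℕ} (A B : Matrix (Fin d) (Fin d) ℝ) :
    (A + B).rank ≤ A.rank + B.rank := by
  rw [Matrix.rank, Matrix.rank, Matrix.rank]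
  have h1 : (A + B).mulVecLin = A.mulVecLin + B.mulVecLin := by
    ext x
    simp [Matrix.mulVecLin_apply, Matrix.add_mulVec]
  rw [h1]
  have hr : LinearMap.range (A.mulVecLin + B.mulVecLin) ≤
      LinearMap.range A.mulVecLin ⊔ LinearMap.range B.mulVecLin := by
    rintro x ⟨y, rfl⟩
    exact Submodule.mem_sup.mpr ⟨_, ⟨y, rfl⟩, _, ⟨y, rfl⟩, rfl⟩
  exact (Submodule.finrank_mono hr).trans
    (Submodule.finrank_add_le_finrank_add_finrank _ _)

private lemma rank_vecMulVec_le {d : ℕ} (a b : Fin d → ℝ) : (vecMulVec a b).rank ≤ 1 := by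
  rw [vecMulVec_eq (Fin 1)]
  exact (Matrix.rank_mul_le_right _ _).trans ((Matrix.rank_le_card_height _).trans (by simp))

private lemma rank_sum_le {d m : ℕ} (M : Fin m → Matrix (Fin d) (Fin d) ℝ)
    (h : ∀ i, (M i).rank ≤ 1) : (∑ i, M i).rank ≤ m := by
  classical
  have key : ∀ s : Finset (Fin m), (∑ i ∈ s, M i).rank ≤ s.card := by
    intro s
    induction s using Finset.induction with
    | empty => simp
    | @insert a s ha ih =>
      rw [Finset.sum_insert ha, Finset.card_insert_of_notMem ha]
      have := h a
      exact (rank_add_le' _ _).trans (by omega)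
  exact (key Finset.univ).trans (by simp)

/-! Symmetry -/

private lemma isSymm_sum {d m : ℕ} (c : Fin m → ℝ) (v : Fin m → Fin d → ℝ) :
    (∑ i, c i • vecMulVec (v i) (v i)).IsSymm := by
  rw [Matrix.IsSymm]
  ext p q
  simp only [Matrix.transpose_apply, Matrix.sum_apply, Matrix.smul_apply, vecMulVec_apply,
    smul_eq_mul]
  exact Finset.sum_congr rfl fun i _ => by ring

/-! Spectral decomposition -/

private lemma eig_decomp {d r : ℕ} (hrd : r ≤ d) (X : Matrix (Fin d) (Fin d) ℝ)
    (hs : X.IsSymm) (hrk : X.rank ≤ r) :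
    ∃ (lam : Fin r → ℝ) (u : Fin r → EuclideanSpace ℝ (Fin d)),
      Orthonormal ℝ u ∧ X = ∑ i, lam i • vecMulVec (⇑(u i)) (⇑(u i)) := by
  classical
  have hH : X.IsHermitian := by
    rw [Matrix.IsHermitian]
    ext p q
    simp only [Matrix.conjTranspose_apply, star_trivial]
    exact congrFun (congrFun hs p) q
  set μ := hH.eigenvalues with hμ
  have hfull : X = ∑ k, μ k • vecMulVec (⇑(hH.eigenvectorBasis k)) (⇑(hH.eigenvectorBasis k)) := by
    conv_lhs => rw [hH.spectral_theorem]
    ext p q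
    simp only [Matrix.mul_apply, Matrix.diagonal_apply, Matrix.sum_apply, vecMulVec_apply,
      Unitary.conjStarAlgAut_apply, Matrix.smul_apply, smul_eq_mul, Function.comp_apply, RCLike.ofReal_real_eq_id, id_eq,
      Matrix.star_apply, star_trivial, IsHermitian.eigenvectorUnitary_apply,
      mul_ite, mul_zero, ite_mul, zero_mul, Finset.sum_ite_eq', Finset.sum_ite_eq,
      Finset.mem_univ, if_true]
    exact Finset.sum_congr rfl fun k _ => by ring
  have hcard : Fintype.card {i // μ i ≠ 0} ≤ r := by
    rw [← hH.rank_eq_card_non_zero_eigs]; exact hrk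
  set S : Finset (Fin d) := Finset.univ.filter (fun k => μ k ≠ 0) with hSdef
  have hScard : S.card ≤ r := by
    refine le_trans (le_of_eq ?_) hcard
    rw [hSdef]
    exact (Fintype.card_subtype _).symm
  obtain ⟨Tt, hST, hTcard⟩ := Finset.exists_superset_card_eq hScard (by simpa using hrd)
  have e : {x // x ∈ Tt} ≃ Fin r := Fintype.equivFinOfCardEq (by rw [Fintype.card_coe, hTcard])
  set f : Fin r → Fin d := fun i => (e.symm i : Fin d) with hfdef
  have hf_inj : Function.Injective f := fun i j h => by
    have := Subtype.coe_injective h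
    exact e.symm.injective this
  refine ⟨fun i => μ (f i), fun i => hH.eigenvectorBasis (f i),
    hH.eigenvectorBasis.orthonormal.comp f hf_inj, ?_⟩
  refine hfull.trans ?_
  have hzero : ∀ k ∈ Finset.univ, k ∉ Tt →
      μ k • vecMulVec (⇑(hH.eigenvectorBasis k)) (⇑(hH.eigenvectorBasis k)) = 0 := by
    intro k _ hk
    have : μ k = 0 := by
      by_contra h
      exact hk (hST (Finset.mem_filter.mpr ⟨Finset.mem_univ _, h⟩))
    rw [this, zero_smul]
  rw [← Finset.sum_subset (Finset.subset_univ Tt) hzero]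
  rw [← Finset.sum_attach Tt
    (fun k => μ k • vecMulVec (⇑(hH.eigenvectorBasis k)) (⇑(hH.eigenvectorBasis k)))]
  exact (Equiv.sum_comp e.symm
    (fun x : {x // x ∈ Tt} => μ (x : Fin d) •
      vecMulVec (⇑(hH.eigenvectorBasis (x : Fin d))) (⇑(hH.eigenvectorBasis (x : Fin d))))).symm

/-! FI evaluation on orthonormal decompositions -/

private lemma FI_diag_eval {d m : ℕ} (c : Fin m → ℝ) (a b : Fin m → Fin d → ℝ)
    (hz : ∀ i j, i ≠ j → mdot (a i) (a j) * mdot (b i) (b j) = 0) :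
    FI (∑ i, c i • vecMulVec (a i) (b i)) (∑ i, c i • vecMulVec (a i) (b i))
      = ∑ i, (c i)^2 * (mdot (a i) (a i) * mdot (b i) (b i)) := by
  rw [FI_expand, double_sum_diag _ (fun i j hij => by rw [mul_assoc, hz i j hij, mul_zero])]
  exact Finset.sum_congr rfl fun i _ => by ring

end Aux

theorem statement17 {d r : ℕ} (ε : ℝ) (hε : 0 < ε) :
    ∃ N : Finset (Matrix (Fin d) (Fin d) ℝ),
      (∀ Y ∈ N, Y.IsSymm ∧ frobNorm Y = 1 ∧ Y.rank ≤ r) ∧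
      (N.card : ℝ) ≤ (1 + 6 / ε) ^ ((2 * d + 1) * r) ∧
      ∀ X : Matrix (Fin d) (Fin d) ℝ, X.IsSymm → frobNorm X = 1 → X.rank ≤ r →
        ∃ Y ∈ N, frobNorm (X - Y) ≤ ε := by
  classical
  set r' := min r d with hr'def
  have hr'd : r' ≤ d := min_le_right _ _
  have hr'r : r' ≤ r := min_le_left _ _
  have hε3 : 0 < ε/3 := by linarith
  obtain ⟨TΛ, hTΛ1, hTΛcard, hTΛnet⟩ := sphere_net r' hε3
  obtain ⟨G, hG1, hGcard, hGnet⟩ := frame_net d r' hε3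
  set mk : EuclideanSpace ℝ (Fin r') × (Fin r' → EuclideanSpace ℝ (Fin d)) →
      Matrix (Fin d) (Fin d) ℝ :=
    fun p => ∑ i, (p.1 i) • vecMulVec (⇑(p.2 i)) (⇑(p.2 i)) with hmk
  have hbase : (1:ℝ) ≤ 1 + 6/ε := by
    have : 0 < 6/ε := by positivity
    linarith
  refine ⟨(TΛ ×ˢ G).image mk, ?_, ?_, ?_⟩
  · -- properties of net points
    intro Y hY
    obtain ⟨⟨μ', g⟩, hp, rfl⟩ := Finset.mem_image.mp hY
    obtain ⟨hμ'T, hgG⟩ := Finset.mem_product.mp hp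
    have hμ'1 : ‖μ'‖ = 1 := hTΛ1 _ hμ'T
    have hg : Orthonormal ℝ g := hG1 _ hgG
    refine ⟨isSymm_sum _ _, ?_, ?_⟩
    · -- Frobenius norm 1
      rw [hmk]
      rw [frobNorm_eq_sqrt_FI]
      have hFI : FI (∑ i, (μ' i) • vecMulVec (⇑(g i)) (⇑(g i)))
          (∑ i, (μ' i) • vecMulVec (⇑(g i)) (⇑(g i))) = ∑ i, (μ' i)^2 := by
        rw [FI_diag_eval _ _ _ (fun i j hij => by
          rw [orthonormal_mdot hg i j, if_neg hij, mul_zero])]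
        refine Finset.sum_congr rfl fun i _ => ?_
        rw [orthonormal_mdot hg i i, if_pos rfl]
        ring
      rw [hFI]
      rw [sum_sq_coords μ', hμ'1]
      simp
    · -- rank
      rw [hmk]
      refine (rank_sum_le _ (fun i => ?_)).trans hr'r
      have he : (μ' i) • vecMulVec (⇑(g i)) (⇑(g i))
          = vecMulVec (fun p => (μ' i) * (g i) p) (⇑(g i)) := by
        ext p q
        simp [vecMulVec_apply]
        ring
      rw [he]
      exact _root_.rank_vecMulVec_le _ _
  · -- cardinality
    have hcard1 : (((TΛ ×ˢ G).image mk).card : ℝ) ≤ (TΛ.card : ℝ) * (G.card : ℝ) := by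
      have := (Finset.card_image_le (f := mk) (s := TΛ ×ˢ G)).trans
        (le_of_eq (Finset.card_product _ _))
      exact_mod_cast this
    have h6 : (2 : ℝ)/(ε/3) = 6/ε := by
      field_simp; norm_num
    have h12 : (4 : ℝ)/(ε/3) = 12/ε := by
      field_simp; ring
    have hTΛcard' : (TΛ.card : ℝ) ≤ (1 + 6/ε)^r' := by rwa [h6] at hTΛcard
    have hGcard' : (G.card : ℝ) ≤ (1 + 6/ε)^(2*d*r') := by
      rw [h12] at hGcard
      refine hGcard.trans ?_
      have hb : (1:ℝ) + 12/ε ≤ (1 + 6/ε)^2 := by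
        have h1 : (0:ℝ) ≤ (6/ε)^2 := sq_nonneg _
        have h2 : ((1:ℝ) + 6/ε)^2 = 1 + 2*(6/ε) + (6/ε)^2 := by ring
        have h3 : (2:ℝ)*(6/ε) = 12/ε := by ring
        linarith
      calc ((1:ℝ) + 12/ε)^(d*r') ≤ ((1 + 6/ε)^2)^(d*r') :=
            pow_le_pow_left₀ (by positivity) hb _
        _ = (1 + 6/ε)^(2*d*r') := by rw [← pow_mul, ← mul_assoc]
    calc (((TΛ ×ˢ G).image mk).card : ℝ) ≤ (TΛ.card : ℝ) * (G.card : ℝ) := hcard1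
      _ ≤ (1 + 6/ε)^r' * (1 + 6/ε)^(2*d*r') := by
          exact mul_le_mul hTΛcard' hGcard' (Nat.cast_nonneg _) (by positivity)
      _ = (1 + 6/ε)^((2*d+1)*r') := by rw [← pow_add]; congr 1; ring
      _ ≤ (1 + 6/ε)^((2*d+1)*r) :=
          pow_le_pow_right₀ hbase (Nat.mul_le_mul_left _ hr'r)
  · -- covering
    intro X hXs hXn hXr
    have hXd : X.rank ≤ d := (Matrix.rank_le_card_width X).trans (by simp)
    have hXr' : X.rank ≤ r' := le_min hXr hXd
    obtain ⟨lam, u, hu, hXdec⟩ := eig_decomp hr'd X hXs hXr'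
    have hFI1 : FI X X = 1 := by
      have h1 : ∑ i, ∑ j, X i j ^2 = 1 := by
        have h2 := hXn
        unfold frobNorm at h2
        have h0 : (0:ℝ) ≤ ∑ i, ∑ j, X i j ^2 := by positivity
        nlinarith [Real.sq_sqrt h0, h2]
      rw [← h1]
      exact Finset.sum_congr rfl fun p _ => Finset.sum_congr rfl fun q _ => by ring
    have hsum : ∑ i, (lam i)^2 = 1 := by
      rw [hXdec] at hFI1
      rw [FI_diag_eval _ _ _ (fun i j hij => by
        rw [orthonormal_mdot hu i j, if_neg hij, mul_zero])] at hFI1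
      rw [← hFI1]
      refine Finset.sum_congr rfl fun i _ => ?_
      rw [orthonormal_mdot hu i i, if_pos rfl]
      ring
    set lamE : EuclideanSpace ℝ (Fin r') := (WithLp.equiv 2 _).symm lam with hlamE
    have hlam_coords : ∀ i, lamE i = lam i := fun i => rfl
    have hlamE1 : ‖lamE‖ = 1 := by
      have h2 : ‖lamE‖^2 = 1 := by
        rw [← sum_sq_coords lamE]
        rw [← hsum]
        exact Finset.sum_congr rfl fun i _ => by rw [hlam_coords]
      nlinarith [norm_nonneg lamE]
    obtain ⟨μ', hμ'T, hμ'close⟩ := hTΛnet lamE hlamE1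
    obtain ⟨g, hgG, hgclose⟩ := hGnet u hu
    have hμ'1 : ‖μ'‖ = 1 := hTΛ1 _ hμ'T
    refine ⟨mk (μ', g), Finset.mem_image_of_mem _ (Finset.mem_product.mpr ⟨hμ'T, hgG⟩), ?_⟩
    set T1 := ∑ i, (lam i - μ' i) • vecMulVec (⇑(u i)) (⇑(u i)) with hT1
    set T2 := ∑ i, (μ' i) • vecMulVec (⇑(u i) - ⇑(g i)) (⇑(u i)) with hT2
    set T3 := ∑ i, (μ' i) • vecMulVec (⇑(g i)) (⇑(u i) - ⇑(g i)) with hT3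
    have hdecomp : X - mk (μ', g) = T1 + T2 + T3 := by
      rw [hXdec, hT1, hT2, hT3, hmk]
      ext p q
      simp only [Matrix.sub_apply, Matrix.add_apply, Matrix.sum_apply, Matrix.smul_apply,
        vecMulVec_apply, smul_eq_mul, Pi.sub_apply]
      rw [← Finset.sum_sub_distrib, ← Finset.sum_add_distrib, ← Finset.sum_add_distrib]
      exact Finset.sum_congr rfl fun i _ => by ring
    have hnorm_sub : ‖lamE - μ'‖ ≤ ε/3 := hμ'close
    -- bound on T1
    have hb1 : frobNorm T1 ≤ ε/3 := by
      rw [hT1, frobNorm_eq_sqrt_FI]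
      have hFI : FI (∑ i, (lam i - μ' i) • vecMulVec (⇑(u i)) (⇑(u i)))
          (∑ i, (lam i - μ' i) • vecMulVec (⇑(u i)) (⇑(u i)))
          = ∑ i, (lam i - μ' i)^2 := by
        rw [FI_diag_eval _ _ _ (fun i j hij => by
          rw [orthonormal_mdot hu i j, if_neg hij, mul_zero])]
        refine Finset.sum_congr rfl fun i _ => ?_
        rw [orthonormal_mdot hu i i, if_pos rfl]
        ring
      rw [hFI]
      have heq : ∑ i, (lam i - μ' i)^2 = ‖lamE - μ'‖^2 := by
        rw [← sum_sq_sub_coords lamE μ']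
        exact Finset.sum_congr rfl fun i _ => by rw [hlam_coords]
      rw [heq]
      calc Real.sqrt (‖lamE - μ'‖^2) = ‖lamE - μ'‖ := Real.sqrt_sq (norm_nonneg _)
        _ ≤ ε/3 := hnorm_sub
    -- bound on T2
    have hdd : ∀ i, mdot (⇑(u i) - ⇑(g i)) (⇑(u i) - ⇑(g i)) ≤ (ε/3)^2 := by
      intro i
      rw [mdot_sub_self]
      exact pow_le_pow_left₀ (norm_nonneg _) (hgclose i) 2
    have hdd0 : ∀ i, 0 ≤ mdot (⇑(u i) - ⇑(g i)) (⇑(u i) - ⇑(g i)) := by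
      intro i
      rw [mdot_sub_self]
      positivity
    have hμ'sum : ∑ i, (μ' i)^2 = 1 := by
      rw [sum_sq_coords μ', hμ'1]; norm_num
    have hb2 : frobNorm T2 ≤ ε/3 := by
      rw [hT2, frobNorm_eq_sqrt_FI]
      have hFI : FI (∑ i, (μ' i) • vecMulVec (⇑(u i) - ⇑(g i)) (⇑(u i)))
          (∑ i, (μ' i) • vecMulVec (⇑(u i) - ⇑(g i)) (⇑(u i)))
          = ∑ i, (μ' i)^2 * (mdot (⇑(u i) - ⇑(g i)) (⇑(u i) - ⇑(g i))) := by
        rw [FI_diag_eval _ _ _ (fun i j hij => by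
          rw [orthonormal_mdot hu i j, if_neg hij, mul_zero])]
        refine Finset.sum_congr rfl fun i _ => ?_
        rw [orthonormal_mdot hu i i, if_pos rfl]
        ring
      rw [hFI]
      have hle : ∑ i, (μ' i)^2 * (mdot (⇑(u i) - ⇑(g i)) (⇑(u i) - ⇑(g i))) ≤ (ε/3)^2 := by
        calc ∑ i, (μ' i)^2 * (mdot (⇑(u i) - ⇑(g i)) (⇑(u i) - ⇑(g i)))
            ≤ ∑ i, (μ' i)^2 * (ε/3)^2 :=
              Finset.sum_le_sum fun i _ =>
                mul_le_mul_of_nonneg_left (hdd i) (sq_nonneg _)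
          _ = (∑ i, (μ' i)^2) * (ε/3)^2 := by rw [Finset.sum_mul]
          _ = (ε/3)^2 := by rw [hμ'sum, one_mul]
      calc Real.sqrt (∑ i, (μ' i)^2 * (mdot (⇑(u i) - ⇑(g i)) (⇑(u i) - ⇑(g i))))
          ≤ Real.sqrt ((ε/3)^2) := Real.sqrt_le_sqrt hle
        _ = ε/3 := Real.sqrt_sq hε3.le
    -- bound on T3
    have hb3 : frobNorm T3 ≤ ε/3 := by
      rw [hT3, frobNorm_eq_sqrt_FI]
      have hFI : FI (∑ i, (μ' i) • vecMulVec (⇑(g i)) (⇑(u i) - ⇑(g i)))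
          (∑ i, (μ' i) • vecMulVec (⇑(g i)) (⇑(u i) - ⇑(g i)))
          = ∑ i, (μ' i)^2 * (mdot (⇑(u i) - ⇑(g i)) (⇑(u i) - ⇑(g i))) := by
        have hg : Orthonormal ℝ g := hG1 _ hgG
        rw [FI_diag_eval _ _ _ (fun i j hij => by
          rw [orthonormal_mdot hg i j, if_neg hij, zero_mul])]
        refine Finset.sum_congr rfl fun i _ => ?_
        rw [orthonormal_mdot hg i i, if_pos rfl]
        ring
      rw [hFI]
      have hle : ∑ i, (μ' i)^2 * (mdot (⇑(u i) - ⇑(g i)) (⇑(u i) - ⇑(g i))) ≤ (ε/3)^2 := by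
        calc ∑ i, (μ' i)^2 * (mdot (⇑(u i) - ⇑(g i)) (⇑(u i) - ⇑(g i)))
            ≤ ∑ i, (μ' i)^2 * (ε/3)^2 :=
              Finset.sum_le_sum fun i _ =>
                mul_le_mul_of_nonneg_left (hdd i) (sq_nonneg _)
          _ = (∑ i, (μ' i)^2) * (ε/3)^2 := by rw [Finset.sum_mul]
          _ = (ε/3)^2 := by rw [hμ'sum, one_mul]
      calc Real.sqrt (∑ i, (μ' i)^2 * (mdot (⇑(u i) - ⇑(g i)) (⇑(u i) - ⇑(g i))))
          ≤ Real.sqrt ((ε/3)^2) := Real.sqrt_le_sqrt hle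
        _ = ε/3 := Real.sqrt_sq hε3.le
    calc frobNorm (X - mk (μ', g)) = frobNorm (T1 + T2 + T3) := by rw [hdecomp]
      _ ≤ frobNorm T1 + frobNorm T2 + frobNorm T3 := frob_triangle3 _ _ _
      _ ≤ ε/3 + ε/3 + ε/3 := by linarith
      _ = ε := by ring
end
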